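/- arXiv:1604.07282 — 4 statements merged into one kernel-verified Lean document; each statement's English description precedes it below -/
import Mathlib

section
/- Suppose 0 < 1/n ≪ ε ≪ d ≤ 1 and let G be an (ε,d)-super-regular bipartite graph with parts U, W of size n each. Then for every edge e of G, the proportion |M_e(G)|/|M(G)| of perfect matchings of G containing e equals (1 ± ε^{1/20})·1/(dn). Equivalently, if a perfect matching σ of G is chosen uniformly at random, then for any edge uv ∈ E(G) with u ∈ U and v ∈ W, P[σ(u) = v] = (1 ± ε^{1/20})/(dn). -/
open Finset

open Classical in
/-- The set of perfect matchings of the bipartite graph `E` between two copies of `Fin n`,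
identified with the permutations `σ` such that every `i` is joined to `σ i`. -/
noncomputable def matchings (n : ℕ) (E : Fin n → Fin n → Prop) : Finset (Equiv.Perm (Fin n)) :=
  Finset.univ.filter fun σ => ∀ i, E i (σ i)

open Classical in
/-- The edge density between `A ⊆ U` and `B ⊆ W`. -/
noncomputable def bdens (n : ℕ) (E : Fin n → Fin n → Prop) (A B : Finset (Fin n)) : ℝ :=
  (((A ×ˢ B).filter fun p => E p.1 p.2).card : ℝ) / ((A.card : ℝ) * (B.card : ℝ))

open Classical in
/-- Degree of a left vertex. -/
noncomputable def degR (n : ℕ) (E : Fin n → Fin n → Prop) (u : Fin n) : ℕ :=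
  (Finset.univ.filter fun w => E u w).card

open Classical in
/-- Degree of a right vertex. -/
noncomputable def degL (n : ℕ) (E : Fin n → Fin n → Prop) (w : Fin n) : ℕ :=
  (Finset.univ.filter fun u => E u w).card

/-- `(ε,d)`-regularity of the bipartite graph `E` with parts of size `n`. -/
def BipRegular (n : ℕ) (E : Fin n → Fin n → Prop) (ε d : ℝ) : Prop :=
  ∀ A B : Finset (Fin n), ε * n < A.card → ε * n < B.card → |bdens n E A B - d| ≤ ε

/-- `(ε,d)`-super-regularity. -/
def BipSuperRegular (n : ℕ) (E : Fin n → Fin n → Prop) (ε d : ℝ) : Prop :=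
  BipRegular n E ε d ∧ (∀ u, |(degR n E u : ℝ) - d * n| ≤ ε * n) ∧
    (∀ w, |(degL n E w : ℝ) - d * n| ≤ ε * n)

-- my auxiliary defs/lemmas

open Classical in
noncomputable def ecount (n : ℕ) (E : Fin n → Fin n → Prop) (A B : Finset (Fin n)) : ℕ :=
  ((A ×ˢ B).filter fun p => E p.1 p.2).card

lemma bdens_eq (n : ℕ) (E : Fin n → Fin n → Prop) (A B : Finset (Fin n)) :
    bdens n E A B = (ecount n E A B : ℝ) / ((A.card : ℝ) * (B.card : ℝ)) := rfl

lemma ecount_bounds {n : ℕ} {E : Fin n → Fin n → Prop} {ε d : ℝ} (hε : 0 ≤ ε)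
    (hreg : BipRegular n E ε d) {A B : Finset (Fin n)}
    (hA : ε * n < A.card) (hB : ε * n < B.card) :
    (d - ε) * A.card * B.card ≤ (ecount n E A B : ℝ) ∧
      (ecount n E A B : ℝ) ≤ (d + ε) * A.card * B.card := by
  have hA0 : (0:ℝ) < A.card := lt_of_le_of_lt (by positivity) hA
  have hB0 : (0:ℝ) < B.card := lt_of_le_of_lt (by positivity) hB
  have h := hreg A B hA hB
  rw [bdens_eq, abs_le] at h
  have hAB : (0:ℝ) < (A.card : ℝ) * (B.card : ℝ) := by positivity
  have h1 : d - ε ≤ (ecount n E A B : ℝ) / ((A.card : ℝ) * (B.card : ℝ)) := by linarith [h.1]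
  have h2 : (ecount n E A B : ℝ) / ((A.card : ℝ) * (B.card : ℝ)) ≤ d + ε := by linarith [h.2]
  rw [le_div_iff₀ hAB] at h1
  rw [div_le_iff₀ hAB] at h2
  constructor <;> nlinarith [h1, h2]

lemma degR_bounds {n : ℕ} {E : Fin n → Fin n → Prop} {ε d : ℝ}
    (h : ∀ u, |(degR n E u : ℝ) - d * n| ≤ ε * n) (u : Fin n) :
    (d - ε) * n ≤ (degR n E u : ℝ) ∧ (degR n E u : ℝ) ≤ (d + ε) * n := by
  have := abs_le.mp (h u); constructor <;> nlinarith [this.1, this.2]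

lemma degL_bounds {n : ℕ} {E : Fin n → Fin n → Prop} {ε d : ℝ}
    (h : ∀ w, |(degL n E w : ℝ) - d * n| ≤ ε * n) (w : Fin n) :
    (d - ε) * n ≤ (degL n E w : ℝ) ∧ (degL n E w : ℝ) ≤ (d + ε) * n := by
  have := abs_le.mp (h w); constructor <;> nlinarith [this.1, this.2]

open Classical in
lemma card_filter_perm_comp {n : ℕ} (σ : Equiv.Perm (Fin n)) (S : Fin n → Prop) :
    (univ.filter fun y => S (σ y)).card = (univ.filter fun z => S z).card := by
  apply Finset.card_nbij' (i := fun y => σ y) (j := fun z => σ.symm z)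
  · intro a ha; simp_all
  · intro a ha; simp_all
  · intro a _; simp
  · intro a _; simp

lemma matchings_nonempty {n : ℕ} {E : Fin n → Fin n → Prop} {ε d : ℝ}
    (hε : 0 < ε) (h2εd : 2 * ε < d) (hn : 0 < n)
    (hreg : BipSuperRegular n E ε d) : (matchings n E).Nonempty := by
  classical
  have hd : 0 < d := lt_trans (by linarith) h2εd
  have hall : ∀ S : Finset (Fin n),
      S.card ≤ (S.biUnion fun i : Fin n => univ.filter fun w => E i w).card := by
    intro S
    rcases S.eq_empty_or_nonempty with rfl | ⟨u₀, hu₀⟩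
    · simp
    set t : Fin n → Finset (Fin n) := fun i => univ.filter fun w => E i w with ht
    set V := S.biUnion t with hV
    have htV : t u₀ ⊆ V := subset_biUnion_of_mem t hu₀
    have hdeg := degR_bounds hreg.2.1 u₀
    have hVn : (t u₀).card = degR n E u₀ := by
      rw [ht]; rfl
    have hVlow : (d - ε) * n ≤ (V.card : ℝ) := by
      calc (d - ε) * n ≤ (degR n E u₀ : ℝ) := hdeg.1
      _ ≤ (V.card : ℝ) := by exact_mod_cast Nat.cast_le.mpr (hVn ▸ card_le_card htV)
    rcases le_or_gt (S.card : ℝ) ((d - ε) * n) with hS | hS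
    · exact_mod_cast Nat.cast_le.mp (le_trans hS hVlow)
    -- S is big
    have hSbig : ε * n < (S.card : ℝ) := by
      have : ε * n < (d - ε) * n := by
        apply mul_lt_mul_of_pos_right _ (by exact_mod_cast hn)
        linarith
      linarith
    by_cases hVuniv : V = univ
    · rw [hVuniv, card_univ, Fintype.card_fin]
      exact S.card_le_univ.trans (by simp)
    · -- pick w₀ ∉ V
      obtain ⟨w₀, hw₀⟩ : ∃ w₀, w₀ ∉ V := by
        by_contra hc
        push_neg at hc
        exact hVuniv (eq_univ_iff_forall.mpr hc)
      -- N_L(w₀) ∩ S = ∅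
      have hNL : (univ.filter fun i => E i w₀) ⊆ univ \ S := by
        intro i hi
        simp only [mem_filter, mem_univ, true_and] at hi
        simp only [mem_sdiff, mem_univ, true_and]
        intro hiS
        exact hw₀ (mem_biUnion.mpr ⟨i, hiS, by simp [ht, hi]⟩)
      have hdegL := degL_bounds hreg.2.2 w₀
      have hsn : S.card ≤ n := by simpa using S.card_le_univ
      have hScard : (S.card : ℝ) ≤ n - (d - ε) * n := by
        have h1 : (degL n E w₀ : ℕ) ≤ (univ \ S).card := card_le_card hNL
        have h2 : (univ \ S).card = n - S.card := by
          rw [card_sdiff_of_subset (subset_univ S), card_univ, Fintype.card_fin]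
        have h4 : ((univ \ S).card : ℝ) = n - S.card := by
          rw [h2, Nat.cast_sub hsn]
        have h5 : ((degL n E w₀ : ℕ) : ℝ) ≤ ((univ \ S).card : ℝ) := Nat.cast_le.mpr h1
        rw [h4] at h5
        linarith [hdegL.1]
      set Tc := univ \ V with hTc
      by_cases hTcbig : ε * n < (Tc.card : ℝ)
      · -- contradiction via regularity: no edges between S and Tc
        exfalso
        have hb := hreg.1 S Tc hSbig hTcbig
        have hempty : ((S ×ˢ Tc).filter fun p => E p.1 p.2) = ∅ := by
          rw [eq_empty_iff_forall_notMem]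
          rintro ⟨i, w⟩ hp
          simp only [mem_filter, mem_product] at hp
          obtain ⟨⟨hiS, hwTc⟩, hEiw⟩ := hp
          rw [hTc, mem_sdiff] at hwTc
          exact hwTc.2 (mem_biUnion.mpr ⟨i, hiS, by simp [ht, hEiw]⟩)
        have : bdens n E S Tc = 0 := by
          rw [bdens]
          rw [show ((S ×ˢ Tc).filter fun p => E p.1 p.2) = ∅ from hempty]
          simp
        rw [this] at hb
        rw [abs_le] at hb
        linarith [hb.1]
      · push_neg at hTcbig
        have hVcard : (V.card : ℝ) = n - Tc.card := by
          have h2 : Tc.card = n - V.card := by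
            rw [hTc, card_sdiff_of_subset (subset_univ V), card_univ, Fintype.card_fin]
          have h3 : V.card ≤ n := V.card_le_univ.trans (by simp)
          rw [h2]
          push_cast [Nat.cast_sub h3]
          ring
        have : (S.card : ℝ) ≤ (V.card : ℝ) := by
          rw [hVcard]
          have : ε * n ≤ (d - ε) * n := by
            apply mul_le_mul_of_nonneg_right _ (by positivity)
            linarith
          linarith
        exact_mod_cast Nat.cast_le.mp this
  obtain ⟨f, hinj, hf⟩ := (Finset.all_card_le_biUnion_card_iff_exists_injective
      (fun i : Fin n => univ.filter fun w => E i w)).mp hall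
  refine ⟨Equiv.ofBijective f (Finite.injective_iff_bijective.mp hinj), ?_⟩
  simp only [matchings, mem_filter, mem_univ, true_and]
  intro i
  have := hf i
  simp only [mem_filter, mem_univ, true_and] at this
  simpa [Equiv.ofBijective] using this

lemma cyc_spec {α : Type*} [DecidableEq α] {v w z₁ z₂ : α}
    (hvw : v ≠ w) (hvz₁ : v ≠ z₁) (hvz₂ : v ≠ z₂) (hwz₁ : w ≠ z₁) (hwz₂ : w ≠ z₂)
    (hz₁₂ : z₁ ≠ z₂) :
    (Equiv.swap v z₂ * (Equiv.swap v z₁ * Equiv.swap v w)) v = w ∧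
    (Equiv.swap v z₂ * (Equiv.swap v z₁ * Equiv.swap v w)) w = z₁ ∧
    (Equiv.swap v z₂ * (Equiv.swap v z₁ * Equiv.swap v w)) z₁ = z₂ ∧
    (Equiv.swap v z₂ * (Equiv.swap v z₁ * Equiv.swap v w)) z₂ = v ∧
    ∀ t, t ≠ v → t ≠ w → t ≠ z₁ → t ≠ z₂ →
      (Equiv.swap v z₂ * (Equiv.swap v z₁ * Equiv.swap v w)) t = t := by
  refine ⟨?_, ?_, ?_, ?_, ?_⟩
  · simp only [Equiv.Perm.mul_apply, Equiv.swap_apply_left]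
    rw [Equiv.swap_apply_of_ne_of_ne hvw.symm hwz₁,
      Equiv.swap_apply_of_ne_of_ne hvw.symm hwz₂]
  · simp only [Equiv.Perm.mul_apply, Equiv.swap_apply_right, Equiv.swap_apply_left]
    rw [Equiv.swap_apply_of_ne_of_ne hvz₁.symm hz₁₂]
  · simp only [Equiv.Perm.mul_apply]
    rw [Equiv.swap_apply_of_ne_of_ne hvz₁.symm hwz₁.symm, Equiv.swap_apply_right,
      Equiv.swap_apply_left]
  · simp only [Equiv.Perm.mul_apply]
    rw [Equiv.swap_apply_of_ne_of_ne hvz₂.symm hwz₂.symm,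
      Equiv.swap_apply_of_ne_of_ne hvz₂.symm hz₁₂.symm, Equiv.swap_apply_right]
  · intro t h1 h2 h3 h4
    simp only [Equiv.Perm.mul_apply]
    rw [Equiv.swap_apply_of_ne_of_ne h1 h2, Equiv.swap_apply_of_ne_of_ne h1 h3,
      Equiv.swap_apply_of_ne_of_ne h1 h4]

open Classical in
lemma card_filter_snd_graph {n : ℕ} (f : Fin n → Fin n) :
    ((univ : Finset (Fin n × Fin n)).filter fun p => p.2 = f p.1).card ≤ n := by
  classical
  have h := Finset.card_le_card_of_injOn (f := Prod.fst)
    (s := (univ : Finset (Fin n × Fin n)).filter fun p => p.2 = f p.1)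
    (t := (univ : Finset (Fin n))) (fun p _ => mem_univ _) ?_
  · simpa using h
  · intro p hp q hq hpq
    simp only [coe_filter, Set.mem_setOf_eq] at hp hq
    exact Prod.ext hpq (by rw [hp.2, hq.2, hpq])

open Classical in
lemma card_filter_fst_eq {n : ℕ} (a : Fin n) :
    ((univ : Finset (Fin n × Fin n)).filter fun p => p.1 = a).card ≤ n := by
  classical
  have h := Finset.card_le_card_of_injOn (f := Prod.snd)
    (s := (univ : Finset (Fin n × Fin n)).filter fun p => p.1 = a)
    (t := (univ : Finset (Fin n))) (fun p _ => mem_univ _) ?_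
  · simpa using h
  · intro p hp q hq hpq
    simp only [coe_filter, Set.mem_setOf_eq] at hp hq
    exact Prod.ext (by rw [hp.2, hq.2]) hpq

open Classical in
lemma card_filter_snd_eq {n : ℕ} (a : Fin n) :
    ((univ : Finset (Fin n × Fin n)).filter fun p => p.2 = a).card ≤ n := by
  classical
  exact card_filter_snd_graph (fun _ => a)


open Classical in
noncomputable def Pset {n : ℕ} (E : Fin n → Fin n → Prop) (u v w : Fin n)
    (σ : Equiv.Perm (Fin n)) : Finset (Fin n × Fin n) :=
  (univ : Finset (Fin n × Fin n)).filter fun p =>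
    E (σ⁻¹ w) (σ p.1) ∧ E p.1 p.2 ∧ E (σ⁻¹ p.2) v ∧
    p.1 ≠ u ∧ p.1 ≠ σ⁻¹ w ∧ p.2 ≠ v ∧ p.2 ≠ w ∧ p.2 ≠ σ p.1

open Classical in
noncomputable def Qset {n : ℕ} (E : Fin n → Fin n → Prop) (v w : Fin n)
    (τ : Equiv.Perm (Fin n)) : Finset (Fin n × Fin n) :=
  (univ : Finset (Fin n × Fin n)).filter fun q =>
    E q.1 w ∧ E q.2 (τ q.1) ∧ E (τ⁻¹ v) (τ q.2)

lemma mem_Pset {n : ℕ} {E : Fin n → Fin n → Prop} {u v w : Fin n}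
    {σ : Equiv.Perm (Fin n)} {p : Fin n × Fin n} :
    p ∈ Pset E u v w σ ↔ (E (σ⁻¹ w) (σ p.1) ∧ E p.1 p.2 ∧ E (σ⁻¹ p.2) v ∧
      p.1 ≠ u ∧ p.1 ≠ σ⁻¹ w ∧ p.2 ≠ v ∧ p.2 ≠ w ∧ p.2 ≠ σ p.1) := by
  simp [Pset]

lemma mem_Qset {n : ℕ} {E : Fin n → Fin n → Prop} {v w : Fin n}
    {τ : Equiv.Perm (Fin n)} {q : Fin n × Fin n} :
    q ∈ Qset E v w τ ↔ (E q.1 w ∧ E q.2 (τ q.1) ∧ E (τ⁻¹ v) (τ q.2)) := by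
  simp [Qset]

lemma mem_matchings {n : ℕ} {E : Fin n → Fin n → Prop} {σ : Equiv.Perm (Fin n)} :
    σ ∈ matchings n E ↔ ∀ i, E i (σ i) := by
  simp [matchings]

lemma Pset_lower {n : ℕ} {E : Fin n → Fin n → Prop} {ε d : ℝ}
    (hε : 0 < ε) (h2εd : 2 * ε < d) (hn : 0 < n)
    (hsr : BipSuperRegular n E ε d) (u v w : Fin n) (σ : Equiv.Perm (Fin n))
    (hσ : σ ∈ matchings n E) :
    (d - ε)^3 * (n:ℝ)^2 - 5 * n ≤ ((Pset E u v w σ).card : ℝ) := by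
  classical
  have hεd : ε < d - ε := by linarith
  have hεn : (0:ℝ) < n := by exact_mod_cast hn
  set x := σ⁻¹ w with hx
  have hYYc : ((univ : Finset (Fin n)).filter fun y => E x (σ y)).card = degR n E x := by
    have := card_filter_perm_comp σ (fun z => E x z)
    simpa [degR] using this
  have hCCc : ((univ : Finset (Fin n)).filter fun z => E (σ⁻¹ z) v).card = degL n E v := by
    have := card_filter_perm_comp (σ⁻¹ : Equiv.Perm (Fin n)) (fun y => E y v)
    simpa [degL] using this
  set YY := (univ : Finset (Fin n)).filter (fun y => E x (σ y)) with hYY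
  set CC := (univ : Finset (Fin n)).filter (fun z => E (σ⁻¹ z) v) with hCC
  have hdx := degR_bounds hsr.2.1 x
  have hdv := degL_bounds hsr.2.2 v
  have hYYb : ε * n < (YY.card : ℝ) := by rw [hYYc]; nlinarith [hdx.1]
  have hCCb : ε * n < (CC.card : ℝ) := by rw [hCCc]; nlinarith [hdv.1]
  have hec := ecount_bounds hε.le hsr.1 hYYb hCCb
  set D1 := (univ : Finset (Fin n × Fin n)).filter (fun p => p.1 = u) with hD1
  set D2 := (univ : Finset (Fin n × Fin n)).filter (fun p => p.1 = x) with hD2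
  set D3 := (univ : Finset (Fin n × Fin n)).filter (fun p => p.2 = v) with hD3
  set D4 := (univ : Finset (Fin n × Fin n)).filter (fun p => p.2 = w) with hD4
  set D5 := (univ : Finset (Fin n × Fin n)).filter (fun p => p.2 = σ p.1) with hD5
  have hsub : ((YY ×ˢ CC).filter fun p => E p.1 p.2) ⊆
      Pset E u v w σ ∪ D1 ∪ D2 ∪ D3 ∪ D4 ∪ D5 := by
    intro p hp
    rw [mem_filter, mem_product] at hp
    obtain ⟨⟨hp1, hp2⟩, hpe⟩ := hp
    rw [hYY, mem_filter] at hp1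
    rw [hCC, mem_filter] at hp2
    simp only [mem_union, hD1, hD2, hD3, hD4, hD5, mem_filter, mem_univ, true_and, mem_Pset]
    by_cases e1 : p.1 = u
    · tauto
    by_cases e2 : p.1 = x
    · tauto
    by_cases e3 : p.2 = v
    · tauto
    by_cases e4 : p.2 = w
    · tauto
    by_cases e5 : p.2 = σ p.1
    · tauto
    refine Or.inl (Or.inl (Or.inl (Or.inl (Or.inl ⟨hp1.2, hpe, hp2.2, e1, e2, e3, e4, e5⟩))))
  have hUcard : (Pset E u v w σ ∪ D1 ∪ D2 ∪ D3 ∪ D4 ∪ D5).card ≤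
      (Pset E u v w σ).card + 5 * n := by
    have b1 : D1.card ≤ n := card_filter_fst_eq u
    have b2 : D2.card ≤ n := card_filter_fst_eq x
    have b3 : D3.card ≤ n := card_filter_snd_eq v
    have b4 : D4.card ≤ n := card_filter_snd_eq w
    have b5 : D5.card ≤ n := card_filter_snd_graph (fun i => σ i)
    calc (Pset E u v w σ ∪ D1 ∪ D2 ∪ D3 ∪ D4 ∪ D5).card
        ≤ (Pset E u v w σ ∪ D1 ∪ D2 ∪ D3 ∪ D4).card + D5.card := card_union_le _ _
      _ ≤ ((Pset E u v w σ ∪ D1 ∪ D2 ∪ D3).card + D4.card) + D5.card := by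
          gcongr; exact card_union_le _ _
      _ ≤ (((Pset E u v w σ ∪ D1 ∪ D2).card + D3.card) + D4.card) + D5.card := by
          gcongr ?_ + _ + _; exact card_union_le _ _
      _ ≤ ((((Pset E u v w σ ∪ D1).card + D2.card) + D3.card) + D4.card) + D5.card := by
          gcongr ?_ + _ + _ + _; exact card_union_le _ _
      _ ≤ (((((Pset E u v w σ).card + D1.card) + D2.card) + D3.card) + D4.card) + D5.card := by
          gcongr ?_ + _ + _ + _ + _; exact card_union_le _ _
      _ ≤ (Pset E u v w σ).card + 5 * n := by omega
  have hchain : (ecount n E YY CC : ℕ) ≤ (Pset E u v w σ).card + 5 * n :=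
    le_trans (card_le_card hsub) hUcard
  have hchainR : (ecount n E YY CC : ℝ) ≤ ((Pset E u v w σ).card : ℝ) + 5 * n := by
    exact_mod_cast hchain
  have hk : (d - ε) * ((d - ε) * n) * ((d - ε) * n) ≤
      (d - ε) * YY.card * CC.card := by
    have h1 : (d - ε) * n ≤ (YY.card : ℝ) := by rw [hYYc]; exact hdx.1
    have h2 : (d - ε) * n ≤ (CC.card : ℝ) := by rw [hCCc]; exact hdv.1
    have hd0 : (0:ℝ) < d - ε := by linarith
    have hnn : (0:ℝ) ≤ (d - ε) * n := by positivity
    have h3 : ((d - ε) * n) * ((d - ε) * n) ≤ (YY.card : ℝ) * CC.card :=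
      mul_le_mul h1 h2 hnn (le_trans hnn h1)
    calc (d - ε) * ((d - ε) * n) * ((d - ε) * n)
        = (d - ε) * (((d - ε) * n) * ((d - ε) * n)) := by ring
      _ ≤ (d - ε) * ((YY.card : ℝ) * CC.card) := by
          exact mul_le_mul_of_nonneg_left h3 hd0.le
      _ = (d - ε) * YY.card * CC.card := by ring
  nlinarith [hec.1, hk, hchainR]

lemma Qset_upper {n : ℕ} {E : Fin n → Fin n → Prop} {ε d : ℝ}
    (hε : 0 < ε) (h2εd : 2 * ε < d) (hn : 0 < n)
    (hsr : BipSuperRegular n E ε d) (v w : Fin n) (τ : Equiv.Perm (Fin n)) :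
    ((Qset E v w τ).card : ℝ) ≤ (d + ε)^3 * (n:ℝ)^2 := by
  classical
  have hεd : ε < d - ε := by linarith
  have hεn : (0:ℝ) < n := by exact_mod_cast hn
  have hDDc : ((univ : Finset (Fin n)).filter fun l => E (τ⁻¹ v) (τ l)).card
      = degR n E (τ⁻¹ v) := by
    have := card_filter_perm_comp τ (fun z => E (τ⁻¹ v) z)
    simpa [degR] using this
  have hWWc : ((univ : Finset (Fin n)).filter fun r => E (τ⁻¹ r) w).card = degL n E w := by
    have := card_filter_perm_comp (τ⁻¹ : Equiv.Perm (Fin n)) (fun y => E y w)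
    simpa [degL] using this
  set DD := (univ : Finset (Fin n)).filter (fun l => E (τ⁻¹ v) (τ l)) with hDD
  set WW := (univ : Finset (Fin n)).filter (fun r => E (τ⁻¹ r) w) with hWW
  have hdD := degR_bounds hsr.2.1 (τ⁻¹ v)
  have hdW := degL_bounds hsr.2.2 w
  have hDDb : ε * n < (DD.card : ℝ) := by rw [hDDc]; nlinarith [hdD.1]
  have hWWb : ε * n < (WW.card : ℝ) := by rw [hWWc]; nlinarith [hdW.1]
  have hec := ecount_bounds hε.le hsr.1 hDDb hWWb
  -- injection from Qset into the edge set between DD and WW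
  have hinj : (Qset E v w τ).card ≤ ((DD ×ˢ WW).filter fun p => E p.1 p.2).card := by
    apply Finset.card_le_card_of_injOn (fun q => (q.2, τ q.1))
    · intro q hq
      rw [Finset.mem_coe, mem_Qset] at hq
      rw [Finset.mem_coe, mem_filter, mem_product, hDD, mem_filter, hWW, mem_filter]
      refine ⟨⟨⟨mem_univ _, hq.2.2⟩, ⟨mem_univ _, ?_⟩⟩, hq.2.1⟩
      rw [Equiv.Perm.inv_def, Equiv.symm_apply_apply]
      exact hq.1
    · intro q hq q' hq' hqq
      have h1 : q.2 = q'.2 := congrArg Prod.fst hqq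
      have h2 : τ q.1 = τ q'.1 := congrArg Prod.snd hqq
      exact Prod.ext (τ.injective h2) h1
  have hcast : ((Qset E v w τ).card : ℝ) ≤ (ecount n E DD WW : ℝ) := by
    exact_mod_cast hinj
  have hk : (d + ε) * DD.card * WW.card ≤ (d + ε) * ((d + ε) * n) * ((d + ε) * n) := by
    have h1 : (DD.card : ℝ) ≤ (d + ε) * n := by rw [hDDc]; exact hdD.2
    have h2 : (WW.card : ℝ) ≤ (d + ε) * n := by rw [hWWc]; exact hdW.2
    have hd0 : (0:ℝ) < d + ε := by linarith
    have hD0 : (0:ℝ) ≤ (DD.card : ℝ) := by positivity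
    have hW0 : (0:ℝ) ≤ (WW.card : ℝ) := by positivity
    have h3 : (DD.card : ℝ) * WW.card ≤ ((d + ε) * n) * ((d + ε) * n) :=
      mul_le_mul h1 h2 hW0 (by positivity)
    calc (d + ε) * DD.card * WW.card = (d + ε) * ((DD.card : ℝ) * WW.card) := by ring
      _ ≤ (d + ε) * (((d + ε) * n) * ((d + ε) * n)) := mul_le_mul_of_nonneg_left h3 hd0.le
      _ = (d + ε) * ((d + ε) * n) * ((d + ε) * n) := by ring
  nlinarith [hec.2, hk, hcast]

lemma switch_facts {n : ℕ} {E : Fin n → Fin n → Prop} {u v w : Fin n}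
    (hv : E u v) (hw : E u w) (hvw : v ≠ w) (σ : Equiv.Perm (Fin n)) (y₁ z₂ : Fin n)
    (hσM : ∀ i, E i (σ i)) (hσu : σ u = v)
    (hP : (y₁, z₂) ∈ Pset E u v w σ) :
    (∀ i, E i ((Equiv.swap v z₂ * (Equiv.swap v (σ y₁) * Equiv.swap v w) * σ) i)) ∧
    (Equiv.swap v z₂ * (Equiv.swap v (σ y₁) * Equiv.swap v w) * σ) u = w ∧
    ((σ⁻¹ w, y₁) ∈ Qset E v w (Equiv.swap v z₂ * (Equiv.swap v (σ y₁) * Equiv.swap v w) * σ)) ∧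
    (Equiv.swap v z₂ * (Equiv.swap v (σ y₁) * Equiv.swap v w) * σ) (σ⁻¹ w) = σ y₁ ∧
    (Equiv.swap v z₂ * (Equiv.swap v (σ y₁) * Equiv.swap v w) * σ) y₁ = z₂ := by
  classical
  rw [mem_Pset] at hP
  obtain ⟨hP1, hP2, hP3, hne1, hne2, hne3, hne4, hne5⟩ := hP
  set x := σ⁻¹ w with hxd
  set y₂ := σ⁻¹ z₂ with hy₂d
  set z₁ := σ y₁ with hz₁d
  set c := Equiv.swap v z₂ * (Equiv.swap v z₁ * Equiv.swap v w) with hcd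
  have σx : σ x = w := σ.apply_symm_apply w
  have σy₂ : σ y₂ = z₂ := σ.apply_symm_apply z₂
  have dvz₁ : v ≠ z₁ := fun h => hne1 (σ.injective ((hσu.trans h))).symm
  have dwz₁ : w ≠ z₁ := fun h => hne2 (σ.injective ((σx.trans h))).symm
  have dvz₂ : v ≠ z₂ := hne3.symm
  have dwz₂ : w ≠ z₂ := hne4.symm
  have dz₁₂ : z₁ ≠ z₂ := hne5.symm
  obtain ⟨hcv, hcw, hcz₁, hcz₂, hcfix⟩ := cyc_spec hvw dvz₁ dvz₂ dwz₁ dwz₂ dz₁₂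
  have mulapp : ∀ i, (c * σ) i = c (σ i) := fun i => rfl
  have ff2 : (c * σ) u = w := by rw [mulapp, hσu, hcv]
  have ff4 : (c * σ) x = z₁ := by rw [mulapp, σx, hcw]
  have ff5 : (c * σ) y₁ = z₂ := by rw [mulapp, ← hz₁d, hcz₁]
  have τy₂ : (c * σ) y₂ = v := by rw [mulapp, σy₂, hcz₂]
  have τinv : (c * σ)⁻¹ v = y₂ := by
    rw [← τy₂, Equiv.Perm.inv_def, Equiv.symm_apply_apply]
  have ff1 : ∀ i, E i ((c * σ) i) := by
    intro i
    by_cases hiu : i = u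
    · subst hiu; rw [ff2]; exact hw
    by_cases hix : i = x
    · subst hix; rw [ff4]; exact hP1
    by_cases hiy₁ : i = y₁
    · subst hiy₁; rw [ff5]; exact hP2
    by_cases hiy₂ : i = y₂
    · subst hiy₂; rw [τy₂]; exact hP3
    have hfix : (c * σ) i = σ i := by
      rw [mulapp]
      apply hcfix
      · exact fun h => hiu (σ.injective (h.trans hσu.symm))
      · exact fun h => hix (σ.injective (h.trans σx.symm))
      · exact fun h => hiy₁ (σ.injective h)
      · exact fun h => hiy₂ (σ.injective (h.trans σy₂.symm))
    rw [hfix]; exact hσM i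
  have ff3 : (x, y₁) ∈ Qset E v w (c * σ) := by
    rw [mem_Qset]
    refine ⟨?_, ?_, ?_⟩
    · have := hσM x; rwa [σx] at this
    · show E y₁ ((c * σ) x); rw [ff4]; exact hσM y₁
    · show E ((c * σ)⁻¹ v) ((c * σ) y₁); rw [τinv, ff5]
      have := hσM y₂; rwa [σy₂] at this
  exact ⟨ff1, ff2, ff3, ff4, ff5⟩

lemma sigma_card_le {n : ℕ} {E : Fin n → Fin n → Prop} {u v w : Fin n}
    (hv : E u v) (hw : E u w) (hvw : v ≠ w) :
    (((matchings n E).filter fun σ => σ u = v).sigma (fun σ => Pset E u v w σ)).card ≤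
      (((matchings n E).filter fun σ => σ u = w).sigma (fun τ => Qset E v w τ)).card := by
  classical
  apply Finset.card_le_card_of_injOn
    (fun t => ⟨Equiv.swap v t.2.2 * (Equiv.swap v (t.1 t.2.1) * Equiv.swap v w) * t.1,
      (t.1⁻¹ w, t.2.1)⟩)
  · rintro ⟨σ, y₁, z₂⟩ ht
    rw [Finset.mem_coe, mem_sigma, mem_filter, mem_matchings] at ht
    obtain ⟨⟨hσM, hσu⟩, hP⟩ := ht
    obtain ⟨ff1, ff2, ff3, ff4, ff5⟩ := switch_facts hv hw hvw σ y₁ z₂ hσM hσu hP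
    rw [Finset.mem_coe, mem_sigma, mem_filter, mem_matchings]
    exact ⟨⟨ff1, ff2⟩, ff3⟩
  · rintro ⟨σ, y₁, z₂⟩ ht ⟨σ', y₁', z₂'⟩ ht' heq
    simp only [Set.mem_setOf_eq] at *
    rw [Finset.mem_coe, mem_sigma, mem_filter, mem_matchings] at ht ht'
    obtain ⟨⟨hσM, hσu⟩, hP⟩ := ht
    obtain ⟨⟨hσM', hσu'⟩, hP'⟩ := ht'
    obtain ⟨ff1, ff2, ff3, ff4, ff5⟩ := switch_facts hv hw hvw σ y₁ z₂ hσM hσu hP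
    obtain ⟨gg1, gg2, gg3, gg4, gg5⟩ := switch_facts hv hw hvw σ' y₁' z₂' hσM' hσu' hP'
    injection heq with h1 h2
    have h2' := h2
    have hx : σ⁻¹ w = σ'⁻¹ w := congrArg Prod.fst h2'
    have hy : y₁ = y₁' := congrArg Prod.snd h2'
    -- derive z₂ = z₂'
    have hz : z₂ = z₂' := by
      rw [← ff5, h1, hy]; exact gg5
    have hs : σ y₁ = σ' y₁' := by
      rw [← ff4, h1, hx]; exact gg4
    have hceq : Equiv.swap v z₂ * (Equiv.swap v (σ y₁) * Equiv.swap v w)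
        = Equiv.swap v z₂' * (Equiv.swap v (σ' y₁') * Equiv.swap v w) := by
      rw [hz, hs]
    have hσeq : σ = σ' := by
      apply mul_left_cancel (a := Equiv.swap v z₂ * (Equiv.swap v (σ y₁) * Equiv.swap v w))
      rw [h1, hceq]
    subst hσeq; subst hy; subst hz; rfl

lemma key_switch {n : ℕ} {E : Fin n → Fin n → Prop} {ε d : ℝ}
    (hε : 0 < ε) (h2εd : 2 * ε < d) (hn : 0 < n)
    (hsr : BipSuperRegular n E ε d) {u v w : Fin n}
    (hv : E u v) (hw : E u w) (hvw : v ≠ w) :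
    (((matchings n E).filter fun σ => σ u = v).card : ℝ) * ((d - ε)^3 * (n:ℝ)^2 - 5 * n) ≤
      (((matchings n E).filter fun σ => σ u = w).card : ℝ) * ((d + ε)^3 * (n:ℝ)^2) := by
  classical
  have c1 : ((((matchings n E).filter fun σ => σ u = v)).card : ℝ) *
      ((d - ε)^3 * (n:ℝ)^2 - 5 * n) ≤
      (((((matchings n E).filter fun σ => σ u = v)).sigma
        (fun σ => Pset E u v w σ)).card : ℝ) := by
    rw [Finset.card_sigma]
    push_cast
    calc ((((matchings n E).filter fun σ => σ u = v)).card : ℝ) *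
        ((d - ε)^3 * (n:ℝ)^2 - 5 * n)
        = ∑ _σ ∈ ((matchings n E).filter fun σ => σ u = v),
            ((d - ε)^3 * (n:ℝ)^2 - 5 * n) := by
          rw [Finset.sum_const, nsmul_eq_mul]
      _ ≤ ∑ σ ∈ ((matchings n E).filter fun σ => σ u = v),
            ((Pset E u v w σ).card : ℝ) := by
          apply Finset.sum_le_sum
          intro σ hσ
          exact Pset_lower hε h2εd hn hsr u v w σ (mem_filter.mp hσ).1
  have c2 : (((((matchings n E).filter fun σ => σ u = w)).sigma
      (fun τ => Qset E v w τ)).card : ℝ) ≤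
      ((((matchings n E).filter fun σ => σ u = w)).card : ℝ) * ((d + ε)^3 * (n:ℝ)^2) := by
    rw [Finset.card_sigma]
    push_cast
    calc ∑ τ ∈ ((matchings n E).filter fun σ => σ u = w), ((Qset E v w τ).card : ℝ)
        ≤ ∑ _τ ∈ ((matchings n E).filter fun σ => σ u = w), ((d + ε)^3 * (n:ℝ)^2) :=
          Finset.sum_le_sum (fun τ _ => Qset_upper hε h2εd hn hsr v w τ)
      _ = ((((matchings n E).filter fun σ => σ u = w)).card : ℝ) *
            ((d + ε)^3 * (n:ℝ)^2) := by
          rw [Finset.sum_const, nsmul_eq_mul]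
  have c3 := sigma_card_le (E := E) (u := u) hv hw hvw
  have c3' : (((((matchings n E).filter fun σ => σ u = v)).sigma
      (fun σ => Pset E u v w σ)).card : ℝ) ≤
      (((((matchings n E).filter fun σ => σ u = w)).sigma (fun τ => Qset E v w τ)).card : ℝ) := by
    exact_mod_cast c3
  linarith

lemma num1 {t : ℝ} (h0 : 0 ≤ t) (h1 : t ≤ 1) :
    (1 + t/1000)^3 * 1 ≤ (1 + t) * ((1 - t/100) * (1 - t/1000)^4) := by
  nlinarith [sq_nonneg t, sq_nonneg (1-t), sq_nonneg (1+t), mul_nonneg h0 h0,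
    pow_le_one₀ h0 h1 (n := 4), sq_nonneg (t*(1-t))]
lemma num2 {t : ℝ} (h0 : 0 ≤ t) (h1 : t ≤ 1) :
    (1 - t) * (1 + t/1000)^4 ≤ (1 - t/100) * (1 - t/1000)^3 := by
  nlinarith [sq_nonneg t, sq_nonneg (1-t), mul_nonneg h0 h0, sq_nonneg (t*(1-t))]

lemma poly1 {d ε t : ℝ} (hd0 : 0 < d) (hε : 0 < ε) (ht0 : 0 < t) (ht1 : t < 1)
    (he : ε ≤ t * d / 1000) :
    (d + ε)^3 * d ≤ (1 + t) * ((1 - t/100) * (d - ε)^4) := by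
  have hb : d + ε ≤ d * (1 + t/1000) := by nlinarith
  have ha : d * (1 - t/1000) ≤ d - ε := by nlinarith
  have hapos : (0:ℝ) < d * (1 - t/1000) := mul_pos hd0 (by linarith)
  have hb3 : (d + ε)^3 ≤ (d * (1 + t/1000))^3 := pow_le_pow_left₀ (by linarith) hb 3
  have ha4 : (d * (1 - t/1000))^4 ≤ (d - ε)^4 := pow_le_pow_left₀ hapos.le ha 4
  have hnum := num1 ht0.le ht1.le
  have expand2 : (d * (1 - t/1000))^4 = d^4 * ((1 - t/1000)^4) := by ring
  calc (d + ε)^3 * d ≤ d^4 * ((1 + t/1000)^3) := by nlinarith [hb3, hd0]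
    _ ≤ d^4 * ((1 + t) * ((1 - t/100) * (1 - t/1000)^4)) := by
        have h4 : (0:ℝ) ≤ d^4 := by positivity
        nlinarith [hnum, h4]
    _ = (1 + t) * ((1 - t/100) * (d^4 * (1 - t/1000)^4)) := by ring
    _ ≤ (1 + t) * ((1 - t/100) * (d - ε)^4) := by
        have h6 : (0:ℝ) ≤ (1 + t) * (1 - t/100) := by nlinarith
        nlinarith [ha4, h6, expand2.le, expand2.symm.le]

lemma poly2 {d ε t : ℝ} (hd0 : 0 < d) (hε : 0 < ε) (ht0 : 0 < t) (ht1 : t < 1)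
    (he : ε ≤ t * d / 1000) :
    (1 - t) * (d + ε)^4 ≤ (1 - t/100) * ((d - ε)^3 * d) := by
  have hb : d + ε ≤ d * (1 + t/1000) := by nlinarith
  have ha : d * (1 - t/1000) ≤ d - ε := by nlinarith
  have hapos : (0:ℝ) < d * (1 - t/1000) := mul_pos hd0 (by linarith)
  have hb4 : (d + ε)^4 ≤ (d * (1 + t/1000))^4 := pow_le_pow_left₀ (by linarith) hb 4
  have ha3 : (d * (1 - t/1000))^3 ≤ (d - ε)^3 := pow_le_pow_left₀ hapos.le ha 3
  have hnum := num2 ht0.le ht1.le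
  calc (1 - t) * (d + ε)^4 ≤ (1 - t) * (d * (1 + t/1000))^4 := by nlinarith [hb4, ht1]
    _ = d^4 * ((1 - t) * (1 + t/1000)^4) := by ring
    _ ≤ d^4 * ((1 - t/100) * (1 - t/1000)^3) := by
        have h4 : (0:ℝ) ≤ d^4 := by positivity
        nlinarith [hnum, h4]
    _ = (1 - t/100) * ((d * (1 - t/1000))^3 * d) := by ring
    _ ≤ (1 - t/100) * ((d - ε)^3 * d) := by
        have h6 : (0:ℝ) ≤ (1 - t/100) := by linarith
        exact mul_le_mul_of_nonneg_left (mul_le_mul_of_nonneg_right ha3 hd0.le) h6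

lemma nbound {d ε t : ℝ} {n : ℕ} (ht0 : 0 < t)
    (hd1000 : 1000 * t^10 ≤ d) (ha2 : d/2 ≤ d - ε) (ht31n : 1 ≤ t^31 * n)
    (hnR : 0 < (n:ℝ)) : 5 * (n:ℝ) ≤ (t/100) * (d-ε)^3 * (n:ℝ)^2 := by
  have s1 : (t/100) * (1000 * t^10 / 2)^3 * (n:ℝ)^2 ≤ (t/100) * (d-ε)^3 * (n:ℝ)^2 := by
    have h : (1000 * t^10 / 2)^3 ≤ (d-ε)^3 := by
      apply pow_le_pow_left₀ (by positivity)
      linarith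
    have hnn : (0:ℝ) ≤ (t/100) := by positivity
    exact mul_le_mul_of_nonneg_right (mul_le_mul_of_nonneg_left h hnn) (sq_nonneg (n:ℝ))
  have s2 : (t/100) * (1000 * t^10 / 2)^3 * (n:ℝ)^2 = (10^9/800) * (t^31 * n) * n := by
    ring
  have s3 : (10^9/800 : ℝ) * 1 * n ≤ (10^9/800) * (t^31 * n) * n :=
    mul_le_mul_of_nonneg_right (mul_le_mul_of_nonneg_left ht31n (by norm_num)) hnR.le
  nlinarith [s1, s2.le, s2.symm.le, s3, hnR]

set_option maxHeartbeats 1000000 in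
theorem stmt10 (d : ℝ) (hd0 : 0 < d) (hd1 : d ≤ 1) :
    ∃ ε₀ : ℝ, 0 < ε₀ ∧ ∀ ε : ℝ, 0 < ε → ε ≤ ε₀ → ∃ n₀ : ℕ, ∀ n : ℕ, n₀ ≤ n →
    ∀ E : Fin n → Fin n → Prop, BipSuperRegular n E ε d →
    ∀ u v : Fin n, E u v →
      (1 - ε ^ ((1:ℝ)/20)) * (1 / (d * n)) ≤
        (((matchings n E).filter fun σ => σ u = v).card : ℝ) / ((matchings n E).card : ℝ) ∧
      (((matchings n E).filter fun σ => σ u = v).card : ℝ) / ((matchings n E).card : ℝ) ≤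
        (1 + ε ^ ((1:ℝ)/20)) * (1 / (d * n)) := by
  classical
  refine ⟨d^2 / 10^6, by positivity, ?_⟩
  intro ε hε hεd
  refine ⟨⌈(1/ε)^2⌉₊ + 1, ?_⟩
  intro n hn E hsr u v hv
  obtain ⟨t, htd⟩ : ∃ x : ℝ, x = ε ^ ((1:ℝ)/20) := ⟨_, rfl⟩
  -- basic numeric facts
  have hε1 : ε < 1 := by nlinarith
  have ht0 : 0 < t := by rw [htd]; exact Real.rpow_pos_of_pos hε _
  have ht1 : t < 1 := by rw [htd]; exact Real.rpow_lt_one hε.le hε1 (by norm_num)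
  have ht20 : t ^ (20:ℕ) = ε := by
    rw [htd, ← Real.rpow_natCast (ε ^ ((1:ℝ)/20)) 20, ← Real.rpow_mul hε.le]
    norm_num
  have ht10 : t^10 ≤ d / 1000 := by
    have h1 : (t^10)^2 ≤ (d/1000)^2 := by nlinarith [ht20, hεd]
    exact (pow_le_pow_iff_left₀ (by positivity) (by positivity) (by norm_num)).mp h1
  have hd1000 : 1000 * t^10 ≤ d := by linarith
  have he : ε ≤ t * d / 1000 := by
    have h19 : t^19 ≤ t^10 := pow_le_pow_of_le_one ht0.le ht1.le (by norm_num)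
    have h20 : ε = t^19 * t := by rw [← ht20]; ring
    nlinarith [h19, ht0, hd1000]
  have h2εd : 2 * ε < d := by nlinarith [ht0, ht1]
  have hn' : 0 < n := lt_of_lt_of_le (Nat.succ_pos _) hn
  have hnR : (0:ℝ) < n := by exact_mod_cast hn'
  have hnbig : 1 / t^40 ≤ (n:ℝ) := by
    have h1 : (1/ε)^2 ≤ (n:ℝ) := by
      calc (1/ε)^2 ≤ (⌈(1/ε)^2⌉₊ : ℝ) := Nat.le_ceil _
        _ ≤ n := by exact_mod_cast le_trans (Nat.le_succ _) hn
    have h2 : (1/ε)^2 = 1/t^40 := by rw [← ht20]; ring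
    linarith [h1, h2.symm.le]
  have ha2 : d/2 ≤ d - ε := by nlinarith
  have ht31n : 1 ≤ t^31 * n := by
    have h1 : t^31 * (1/t^40) ≤ t^31 * n :=
      mul_le_mul_of_nonneg_left hnbig (by positivity)
    have h2 : t^31 * (1/t^40) = 1/t^9 := by
      field_simp
    have h3 : (1:ℝ) ≤ 1/t^9 := by
      rw [le_div_iff₀ (by positivity : (0:ℝ) < t^9), one_mul]
      exact pow_le_one₀ ht0.le ht1.le
    linarith [h1, h2.symm.le, h3]
  have hN1 : 5 * (n:ℝ) ≤ (t/100) * (d-ε)^3 * (n:ℝ)^2 := nbound ht0 hd1000 ha2 ht31n hnR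
  -- abbreviations (opaque, to avoid defeq blowups)
  obtain ⟨L, hLd⟩ : ∃ x : ℝ, x = (d - ε)^3 * (n:ℝ)^2 - 5 * n := ⟨_, rfl⟩
  obtain ⟨R, hRd⟩ : ∃ x : ℝ, x = (d + ε)^3 * (n:ℝ)^2 := ⟨_, rfl⟩
  have hde : (0:ℝ) < d - ε := by linarith
  have hLlow : (1 - t/100) * ((d-ε)^3 * (n:ℝ)^2) ≤ L := by
    rw [hLd]; nlinarith [hN1]
  have hL0 : 0 < L := by
    have h1 : (0:ℝ) < (1 - t/100) := by linarith
    have h2 : (0:ℝ) < (d-ε)^3 * (n:ℝ)^2 := mul_pos (pow_pos hde 3) (pow_pos hnR 2)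
    nlinarith [hLlow, h1, h2]
  have hR0 : 0 < R := by rw [hRd]; positivity
  have hLR : L ≤ R := by
    rw [hLd, hRd]
    have h3 : (d-ε)^3 ≤ (d+ε)^3 := pow_le_pow_left₀ hde.le (by linarith) 3
    nlinarith [h3, sq_nonneg (n:ℝ), hnR]
  -- neighborhood of u
  obtain ⟨N, hNd⟩ : ∃ N : Finset (Fin n), N = univ.filter (fun z => E u z) := ⟨_, rfl⟩
  have hNcard : N.card = degR n E u := by rw [hNd]; rfl
  have hdegu := degR_bounds hsr.2.1 u
  have hNlow : (d - ε) * n ≤ (N.card : ℝ) := by rw [hNcard]; exact hdegu.1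
  have hNhigh : (N.card : ℝ) ≤ (d + ε) * n := by rw [hNcard]; exact hdegu.2
  obtain ⟨A, hAd⟩ : ∃ x : ℝ, x = (((matchings n E).filter fun σ => σ u = v).card : ℝ) :=
    ⟨_, rfl⟩
  obtain ⟨M', hMd⟩ : ∃ x : ℝ, x = ((matchings n E).card : ℝ) := ⟨_, rfl⟩
  have hA0 : 0 ≤ A := by rw [hAd]; positivity
  -- fiberwise decomposition
  have hM : M' = ∑ z ∈ N, (((matchings n E).filter fun σ => σ u = z).card : ℝ) := by
    rw [hMd]
    have h := Finset.card_eq_sum_card_fiberwise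
      (f := fun σ : Equiv.Perm (Fin n) => σ u) (s := matchings n E) (t := N) ?_
    · rw [h]; push_cast; rfl
    · intro σ hσ
      rw [Finset.mem_coe, hNd, mem_filter]
      exact ⟨mem_univ _, (mem_matchings.mp hσ) u⟩
  have hM0 : (0:ℝ) < M' := by
    rw [hMd]
    have h := matchings_nonempty hε h2εd hn' hsr
    exact_mod_cast Finset.card_pos.mpr h
  -- pairwise comparisons with v
  have hkey1 : ∀ z ∈ N, (((matchings n E).filter fun σ => σ u = z).card : ℝ) * L ≤ A * R := by
    intro z hz
    rw [hNd, mem_filter] at hz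
    rw [hAd, hLd, hRd]
    by_cases hzv : z = v
    · subst hzv
      have h0 : (0:ℝ) ≤ (((matchings n E).filter fun σ => σ u = z).card : ℝ) := by positivity
      rw [hLd, hRd] at hLR
      nlinarith [hLR, h0]
    · exact key_switch hε h2εd hn' hsr hz.2 hv hzv
  have hkey2 : ∀ z ∈ N, A * L ≤ (((matchings n E).filter fun σ => σ u = z).card : ℝ) * R := by
    intro z hz
    rw [hNd, mem_filter] at hz
    rw [hAd, hLd, hRd]
    by_cases hzv : z = v
    · subst hzv
      have h0 : (0:ℝ) ≤ (((matchings n E).filter fun σ => σ u = z).card : ℝ) := by positivity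
      rw [hLd, hRd] at hLR
      nlinarith [hLR, h0]
    · exact key_switch hε h2εd hn' hsr hv hz.2 (fun h => hzv h.symm)
  -- summed bounds
  have hup : M' * L ≤ (N.card : ℝ) * (A * R) := by
    calc M' * L = ∑ z ∈ N, (((matchings n E).filter fun σ => σ u = z).card : ℝ) * L := by
          rw [hM, Finset.sum_mul]
      _ ≤ ∑ _z ∈ N, A * R := Finset.sum_le_sum (fun z hz => hkey1 z hz)
      _ = (N.card : ℝ) * (A * R) := by rw [Finset.sum_const, nsmul_eq_mul]
  have hlo : (N.card : ℝ) * (A * L) ≤ M' * R := by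
    calc (N.card : ℝ) * (A * L) = ∑ _z ∈ N, A * L := by rw [Finset.sum_const, nsmul_eq_mul]
      _ ≤ ∑ z ∈ N, (((matchings n E).filter fun σ => σ u = z).card : ℝ) * R :=
          Finset.sum_le_sum (fun z hz => hkey2 z hz)
      _ = M' * R := by rw [hM, Finset.sum_mul]
  -- polynomial bounds
  have hpoly1 := poly1 hd0 hε ht0 ht1 he
  have hpoly2 := poly2 hd0 hε ht0 ht1 he
  have hdn0 : (0:ℝ) < d * n := by positivity
  have hG1 : d * n * R ≤ (1 + t) * ((N.card : ℝ) * L) := by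
    have step1 : (1 + t) * ((d - ε) * n * ((1 - t/100) * ((d-ε)^3 * (n:ℝ)^2))) ≤
        (1 + t) * ((N.card : ℝ) * L) := by
      have h1 : (0:ℝ) ≤ 1 + t := by linarith
      have h2 : (d - ε) * n * ((1 - t/100) * ((d-ε)^3 * (n:ℝ)^2)) ≤ (N.card : ℝ) * L := by
        have h3 : (0:ℝ) ≤ (d - ε) * n := by positivity
        have h4 : (0:ℝ) ≤ (1 - t/100) * ((d-ε)^3 * (n:ℝ)^2) := by
          have h5 : (0:ℝ) ≤ (d-ε)^3 * (n:ℝ)^2 := by positivity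
          nlinarith [ht1]
        exact mul_le_mul hNlow hLlow h4 (by positivity)
      exact mul_le_mul_of_nonneg_left h2 h1
    have step2 : d * n * R = ((d + ε)^3 * d) * (n:ℝ)^3 := by rw [hRd]; ring
    have step3 : (1 + t) * ((d - ε) * n * ((1 - t/100) * ((d-ε)^3 * (n:ℝ)^2))) =
        ((1 + t) * ((1 - t/100) * (d - ε)^4)) * (n:ℝ)^3 := by ring
    have step4 : ((d + ε)^3 * d) * (n:ℝ)^3 ≤
        ((1 + t) * ((1 - t/100) * (d - ε)^4)) * (n:ℝ)^3 :=
      mul_le_mul_of_nonneg_right hpoly1 (by positivity)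
    linarith [step1, step2.le, step2.symm.le, step3.le, step3.symm.le, step4]
  have hG2 : (1 - t) * ((N.card : ℝ) * R) ≤ d * n * L := by
    have step1 : (1 - t) * ((N.card : ℝ) * R) ≤ (1 - t) * ((d + ε) * n * R) := by
      have h1 : (0:ℝ) ≤ 1 - t := by linarith
      have h2 : (N.card : ℝ) * R ≤ (d + ε) * n * R :=
        mul_le_mul_of_nonneg_right hNhigh hR0.le
      exact mul_le_mul_of_nonneg_left h2 h1
    have step2 : (1 - t) * ((d + ε) * n * R) = ((1 - t) * (d + ε)^4) * (n:ℝ)^3 := by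
      rw [hRd]; ring
    have step3 : ((1 - t) * (d + ε)^4) * (n:ℝ)^3 ≤
        ((1 - t/100) * ((d - ε)^3 * d)) * (n:ℝ)^3 :=
      mul_le_mul_of_nonneg_right hpoly2 (by positivity)
    have step4 : ((1 - t/100) * ((d - ε)^3 * d)) * (n:ℝ)^3 ≤ d * n * L := by
      have h1 : ((1 - t/100) * ((d - ε)^3 * d)) * (n:ℝ)^3 =
          d * n * ((1 - t/100) * ((d-ε)^3 * (n:ℝ)^2)) := by ring
      have h2 : d * n * ((1 - t/100) * ((d-ε)^3 * (n:ℝ)^2)) ≤ d * n * L :=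
        mul_le_mul_of_nonneg_left hLlow hdn0.le
      linarith [h1.le, h1.symm.le, h2]
    linarith [step1, step2.le, step2.symm.le, step3, step4]
  -- conclude
  have goal1 : A * (d * n) ≤ (1 + t) * M' := by
    have h1 : A * (d * n) * R ≤ (1 + t) * (M' * R) := by
      calc A * (d * n) * R = A * (d * n * R) := by ring
        _ ≤ A * ((1 + t) * ((N.card : ℝ) * L)) := mul_le_mul_of_nonneg_left hG1 hA0
        _ = (1 + t) * ((N.card : ℝ) * (A * L)) := by ring
        _ ≤ (1 + t) * (M' * R) := by
            have h2 : (0:ℝ) ≤ 1 + t := by linarith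
            exact mul_le_mul_of_nonneg_left hlo h2
    have h2 : A * (d * n) * R ≤ ((1 + t) * M') * R := by linarith [h1]
    exact le_of_mul_le_mul_right h2 hR0
  have goal2 : (1 - t) * M' ≤ A * (d * n) := by
    have h1 : ((1 - t) * M') * L ≤ (A * (d * n)) * L := by
      calc ((1 - t) * M') * L = (1 - t) * (M' * L) := by ring
        _ ≤ (1 - t) * ((N.card : ℝ) * (A * R)) := by
            have h2 : (0:ℝ) ≤ 1 - t := by linarith
            exact mul_le_mul_of_nonneg_left hup h2
        _ = A * ((1 - t) * ((N.card : ℝ) * R)) := by ring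
        _ ≤ A * (d * n * L) := mul_le_mul_of_nonneg_left hG2 hA0
        _ = (A * (d * n)) * L := by ring
    exact le_of_mul_le_mul_right h1 hL0
  rw [← hAd, ← hMd, ← htd]
  constructor
  · rw [mul_one_div, div_le_div_iff₀ hdn0 hM0]
    linarith [goal2]
  · rw [mul_one_div, div_le_div_iff₀ hM0 hdn0]
    linarith [goal1]
end

section
/- Suppose 0 < 1/n ≪ 1/s ≪ 1/Δ, r, s, k, n are positive integers, and M is a real number with M ≤ 2Δs and M + s^{2/3} + 1 ≤ k < n/2 for a positive integer k. Let H be a bipartite graph with parts V₁, V₂ of size n each, such that every vertex x satisfies M - s^{2/3} - 1 ≤ d_H(x) ≤ M + s^{2/3}. Then there exists a k-regular bipartite graph H' on the same parts with H ⊆ H'. -/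
open Finset

namespace Stmt12


open Classical in
noncomputable def cnt {α β : Type*} (f : α → β) (s : Finset α) (b : β) : ℕ :=
  (s.filter fun x => f x = b).card

variable {α β : Type*} {f : α → β} {s t : Finset α} {a : α} {b : β}

lemma cnt_mono (h : s ⊆ t) (f : α → β) (b : β) : cnt f s b ≤ cnt f t b := by
  classical
  unfold cnt
  exact card_le_card (filter_subset_filter _ h)

lemma cnt_insert_eq [DecidableEq α] (h : a ∉ s) (hfa : f a = b) :
    cnt f (insert a s) b = cnt f s b + 1 := by
  classical
  unfold cnt
  rw [filter_insert, if_pos hfa, card_insert_of_notMem fun hc => h (mem_of_mem_filter _ hc)]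

lemma cnt_insert_ne [DecidableEq α] (hfa : f a ≠ b) :
    cnt f (insert a s) b = cnt f s b := by
  classical
  unfold cnt
  rw [filter_insert, if_neg hfa]

lemma cnt_erase_eq [DecidableEq α] (h : a ∈ s) (hfa : f a = b) :
    cnt f (s.erase a) b + 1 = cnt f s b := by
  classical
  unfold cnt
  rw [filter_erase, card_erase_of_mem (mem_filter.mpr ⟨h, hfa⟩)]
  have : 0 < (s.filter fun x => f x = b).card := card_pos.mpr ⟨a, mem_filter.mpr ⟨h, hfa⟩⟩
  omega

lemma cnt_erase_ne [DecidableEq α] (hfa : f a ≠ b) :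
    cnt f (s.erase a) b = cnt f s b := by
  classical
  unfold cnt
  have hnm : a ∉ s.filter (fun x => f x = b) := fun hc => hfa (mem_filter.mp hc).2
  rw [filter_erase, erase_eq_of_notMem hnm]

lemma cnt_union [DecidableEq α] (h : Disjoint s t) (f : α → β) (b : β) :
    cnt f (s ∪ t) b = cnt f s b + cnt f t b := by
  classical
  unfold cnt
  rw [filter_union, card_union_of_disjoint (disjoint_filter_filter h)]

lemma sum_cnt [Fintype β] (f : α → β) (s : Finset α) : ∑ b, cnt f s b = s.card := by
  classical
  unfold cnt
  exact (card_eq_sum_card_fiberwise fun x _ => mem_univ (f x)).symm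


variable {n : ℕ}

open Classical in
/-- right-neighborhood of a left vertex -/
noncomputable def nbrR (G : Finset (Fin n × Fin n)) (u : Fin n) : Finset (Fin n) :=
  univ.filter fun b => (u, b) ∈ G

open Classical in
noncomputable def nbrL (G : Finset (Fin n × Fin n)) (w : Fin n) : Finset (Fin n) :=
  univ.filter fun a => (a, w) ∈ G

lemma card_nbrR (G : Finset (Fin n × Fin n)) (u : Fin n) :
    (nbrR G u).card = cnt Prod.fst G u := by
  classical
  unfold nbrR cnt
  rw [(card_image_of_injective (univ.filter fun b : Fin n => (u, b) ∈ G)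
    (f := fun b : Fin n => ((u, b) : Fin n × Fin n)) (fun b b' h => by simpa using h)).symm]
  congr 1
  ext p
  obtain ⟨p1, p2⟩ := p
  simp only [mem_filter, mem_image, mem_univ, true_and, Prod.mk.injEq]
  constructor
  · rintro ⟨b, hb, rfl, rfl⟩
    exact ⟨hb, rfl⟩
  · rintro ⟨hG, rfl⟩
    exact ⟨p2, hG, rfl, rfl⟩

lemma card_nbrL (G : Finset (Fin n × Fin n)) (w : Fin n) :
    (nbrL G w).card = cnt Prod.snd G w := by
  classical
  unfold nbrL cnt
  rw [(card_image_of_injective (univ.filter fun a : Fin n => (a, w) ∈ G)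
    (f := fun a : Fin n => ((a, w) : Fin n × Fin n)) (fun a a' h => by simpa using h)).symm]
  congr 1
  ext p
  obtain ⟨p1, p2⟩ := p
  simp only [mem_filter, mem_image, mem_univ, true_and, Prod.mk.injEq]
  constructor
  · rintro ⟨a, ha, rfl, rfl⟩
    exact ⟨ha, rfl⟩
  · rintro ⟨hG, rfl⟩
    exact ⟨p1, hG, rfl, rfl⟩

lemma card_nbrR_compl (G : Finset (Fin n × Fin n)) (u : Fin n) :
    (univ.filter fun b : Fin n => (u, b) ∉ G).card + cnt Prod.fst G u = n := by
  classical
  rw [← card_nbrR]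
  unfold nbrR
  rw [add_comm]
  have := card_filter_add_card_filter_not (s := (univ : Finset (Fin n)))
    (p := fun b => (u, b) ∈ G)
  simpa using this

lemma card_nbrL_compl (G : Finset (Fin n × Fin n)) (w : Fin n) :
    (univ.filter fun a : Fin n => (a, w) ∉ G).card + cnt Prod.snd G w = n := by
  classical
  rw [← card_nbrL]
  unfold nbrL
  rw [add_comm]
  have := card_filter_add_card_filter_not (s := (univ : Finset (Fin n)))
    (p := fun a => (a, w) ∈ G)
  simpa using this

/-- if all right-degrees are `D` and all left-degrees are at most `D`,
then all left-degrees are `D`. -/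
lemma left_eq_of_right_eq {D : ℕ} {G : Finset (Fin n × Fin n)}
    (hR : ∀ u, cnt Prod.fst G u = D) (hL : ∀ w, cnt Prod.snd G w ≤ D) :
    ∀ w, cnt Prod.snd G w = D := by
  by_contra h
  push_neg at h
  obtain ⟨w, hw⟩ := h
  have h1 : ∑ b : Fin n, cnt Prod.snd G b < ∑ _b : Fin n, D :=
    sum_lt_sum (fun b _ => hL b) ⟨w, mem_univ w, lt_of_le_of_ne (hL w) hw⟩
  have h2 : ∑ a : Fin n, cnt Prod.fst G a = ∑ _a : Fin n, D := by
    exact Finset.sum_congr rfl fun a _ => hR a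
  rw [sum_cnt] at h1 h2
  omega


lemma swap_cnt_fst {G : Finset (Fin n × Fin n)} {u w : Fin n} {p : Fin n × Fin n}
    (hpG : p ∈ G) (hup1 : u ≠ p.1) (_hwp2 : w ≠ p.2)
    (hup2 : (u, p.2) ∉ G) (hpw : (p.1, w) ∉ G) (a : Fin n) :
    cnt Prod.fst (insert (u, p.2) (insert (p.1, w) (G.erase p))) a
      = if a = u then cnt Prod.fst G a + 1 else cnt Prod.fst G a := by
  classical
  have hS : ((u, p.2) : Fin n × Fin n) ∉ insert (p.1, w) (G.erase p) := by
    intro hc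
    rcases mem_insert.mp hc with h | h
    · exact hup1 (congrArg Prod.fst h)
    · exact hup2 (mem_of_mem_erase h)
  have hS2 : ((p.1, w) : Fin n × Fin n) ∉ G.erase p := fun hc => hpw (mem_of_mem_erase hc)
  by_cases hau : a = u
  · subst hau
    rw [if_pos rfl, cnt_insert_eq hS rfl,
      cnt_insert_ne (show Prod.fst ((p.1, w) : Fin n × Fin n) ≠ a from Ne.symm hup1),
      cnt_erase_ne (show Prod.fst p ≠ a from Ne.symm hup1)]
  · rw [if_neg hau]
    by_cases hap : a = p.1
    · rw [cnt_insert_ne (show Prod.fst ((u, p.2) : Fin n × Fin n) ≠ a from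
        fun h => hau h.symm),
        cnt_insert_eq hS2 (show Prod.fst ((p.1, w) : Fin n × Fin n) = a from hap.symm)]
      have := cnt_erase_eq hpG (show Prod.fst p = a from hap.symm)
      omega
    · rw [cnt_insert_ne (show Prod.fst ((u, p.2) : Fin n × Fin n) ≠ a from
        fun h => hau h.symm),
        cnt_insert_ne (show Prod.fst ((p.1, w) : Fin n × Fin n) ≠ a from
        fun h => hap h.symm),
        cnt_erase_ne (show Prod.fst p ≠ a from fun h => hap h.symm)]

lemma swap_cnt_snd {G : Finset (Fin n × Fin n)} {u w : Fin n} {p : Fin n × Fin n}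
    (hpG : p ∈ G) (hup1 : u ≠ p.1) (hwp2 : w ≠ p.2)
    (hup2 : (u, p.2) ∉ G) (hpw : (p.1, w) ∉ G) (b : Fin n) :
    cnt Prod.snd (insert (u, p.2) (insert (p.1, w) (G.erase p))) b
      = if b = w then cnt Prod.snd G b + 1 else cnt Prod.snd G b := by
  classical
  have hS : ((u, p.2) : Fin n × Fin n) ∉ insert (p.1, w) (G.erase p) := by
    intro hc
    rcases mem_insert.mp hc with h | h
    · exact hup1 (congrArg Prod.fst h)
    · exact hup2 (mem_of_mem_erase h)
  have hS2 : ((p.1, w) : Fin n × Fin n) ∉ G.erase p := fun hc => hpw (mem_of_mem_erase hc)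
  by_cases hbw : b = w
  · subst hbw
    rw [if_pos rfl,
      cnt_insert_ne (show Prod.snd ((u, p.2) : Fin n × Fin n) ≠ b from Ne.symm hwp2),
      cnt_insert_eq hS2 rfl,
      cnt_erase_ne (show Prod.snd p ≠ b from Ne.symm hwp2)]
  · rw [if_neg hbw]
    by_cases hbp : b = p.2
    · rw [cnt_insert_eq hS (show Prod.snd ((u, p.2) : Fin n × Fin n) = b from hbp.symm),
        cnt_insert_ne (show Prod.snd ((p.1, w) : Fin n × Fin n) ≠ b from
        fun h => hbw h.symm)]
      have := cnt_erase_eq hpG (show Prod.snd p = b from hbp.symm)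
      omega
    · rw [cnt_insert_ne (show Prod.snd ((u, p.2) : Fin n × Fin n) ≠ b from
        fun h => hbp h.symm),
        cnt_insert_ne (show Prod.snd ((p.1, w) : Fin n × Fin n) ≠ b from
        fun h => hbw h.symm),
        cnt_erase_ne (show Prod.snd p ≠ b from fun h => hbp h.symm)]


lemma cnt_fst_filter (G : Finset (Fin n × Fin n)) (a : Fin n) :
    cnt Prod.fst G a = (G.filter fun q => q.1 = a).card := by
  unfold cnt
  exact congrArg Finset.card (Finset.filter_congr_decidable _ _ _)

lemma cnt_snd_filter (G : Finset (Fin n × Fin n)) (b : Fin n) :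
    cnt Prod.snd G b = (G.filter fun q => q.2 = b).card := by
  unfold cnt
  exact congrArg Finset.card (Finset.filter_congr_decidable _ _ _)

lemma phase1 {n D : ℕ} (hn : D * D + D < n) (E₀ : Finset (Fin n × Fin n))
    (hER : ∀ u, cnt Prod.fst E₀ u < D) (hEL : ∀ w, cnt Prod.snd E₀ w < D) :
    ∃ G, E₀ ⊆ G ∧ (∀ u, cnt Prod.fst G u = D) ∧ (∀ w, cnt Prod.snd G w = D) := by
  classical
  suffices h : ∀ N (G : Finset (Fin n × Fin n)), E₀ ⊆ G →
      (∀ u, cnt Prod.fst G u ≤ D) → (∀ w, cnt Prod.snd G w ≤ D) →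
      (∑ u, (D - cnt Prod.fst G u)) ≤ N →
      ∃ G', E₀ ⊆ G' ∧ (∀ u, cnt Prod.fst G' u = D) ∧ (∀ w, cnt Prod.snd G' w = D) by
    exact h (∑ u, (D - cnt Prod.fst E₀ u)) E₀ Subset.rfl (fun u => (hER u).le)
      (fun w => (hEL w).le) le_rfl
  intro N
  induction N with
  | zero =>
    intro G hsub hR hL hm
    have hRD : ∀ u, cnt Prod.fst G u = D := by
      intro u
      have h0 : D - cnt Prod.fst G u = 0 :=
        Finset.sum_eq_zero_iff.mp (Nat.le_zero.mp hm) u (mem_univ u)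
      have := hR u
      omega
    exact ⟨G, hsub, hRD, left_eq_of_right_eq hRD hL⟩
  | succ N ih =>
    intro G hsub hR hL hm
    by_cases hall : ∀ u, cnt Prod.fst G u = D
    · exact ⟨G, hsub, hall, left_eq_of_right_eq hall hL⟩
    push_neg at hall
    obtain ⟨u, hune⟩ := hall
    have hu : cnt Prod.fst G u < D := lt_of_le_of_ne (hR u) hune
    have hex : ∃ w, cnt Prod.snd G w < D := by
      by_contra h
      push_neg at h
      have hl : ∀ w, cnt Prod.snd G w = D := fun w => le_antisymm (hL w) (h w)
      have h1 : ∑ a : Fin n, cnt Prod.fst G a < ∑ _a : Fin n, D :=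
        sum_lt_sum (fun i _ => hR i) ⟨u, mem_univ u, hu⟩
      have h2 : ∑ b : Fin n, cnt Prod.snd G b = ∑ _b : Fin n, D :=
        Finset.sum_congr rfl fun b _ => hl b
      rw [sum_cnt] at h1
      rw [sum_cnt] at h2
      omega
    obtain ⟨w, hw⟩ := hex
    by_cases hpair : ∃ q : Fin n × Fin n,
        cnt Prod.fst G q.1 < D ∧ cnt Prod.snd G q.2 < D ∧ q ∉ G
    · -- insert a new edge between two deficient vertices
      obtain ⟨q, hq1, hq2, hq3⟩ := hpair
      have hR' : ∀ a, cnt Prod.fst (insert q G) a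
          = if a = q.1 then cnt Prod.fst G a + 1 else cnt Prod.fst G a := by
        intro a
        by_cases h : a = q.1
        · rw [if_pos h, cnt_insert_eq hq3 h.symm]
        · rw [if_neg h, cnt_insert_ne (fun hc => h hc.symm)]
      have hL' : ∀ b, cnt Prod.snd (insert q G) b
          = if b = q.2 then cnt Prod.snd G b + 1 else cnt Prod.snd G b := by
        intro b
        by_cases h : b = q.2
        · rw [if_pos h, cnt_insert_eq hq3 h.symm]
        · rw [if_neg h, cnt_insert_ne (fun hc => h hc.symm)]
      refine ih (insert q G) (hsub.trans (subset_insert _ _)) ?_ ?_ ?_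
      · intro a
        rw [hR' a]
        split
        · next h => subst h; omega
        · exact hR a
      · intro b
        rw [hL' b]
        split
        · next h => subst h; omega
        · exact hL b
      · have hlt : ∑ a, (D - cnt Prod.fst (insert q G) a) < ∑ a, (D - cnt Prod.fst G a) := by
          apply sum_lt_sum
          · intro a _
            rw [hR' a]
            split <;> omega
          · refine ⟨q.1, mem_univ _, ?_⟩
            rw [hR' q.1, if_pos rfl]
            omega
        omega
    · -- swap case
      push_neg at hpair
      have huw : (u, w) ∈ G := hpair (u, w) hu hw
      have hswap : ∃ p, p ∈ G ∧ p ∉ E₀ ∧ (p.1, w) ∉ G ∧ (u, p.2) ∉ G := by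
        by_contra hsw
        push_neg at hsw
        set X := univ.filter fun a : Fin n => (a, w) ∉ G with hXdef
        have hXcard : n - D ≤ X.card := by
          have := card_nbrL_compl G w
          rw [← hXdef] at this
          omega
        set T := G.filter fun q : Fin n × Fin n => (u, q.2) ∈ G with hTdef
        have hXprop : ∀ a ∈ X, ∃ q : Fin n × Fin n,
            q ∈ G ∧ q.1 = a ∧ q ∉ E₀ ∧ (u, q.2) ∈ G := by
          intro a ha
          rw [hXdef, mem_filter] at ha
          have haw : (a, w) ∉ G := ha.2
          have haD : cnt Prod.fst G a = D := by
            by_contra hne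
            exact haw (hpair (a, w) (lt_of_le_of_ne (hR a) hne) hw)
          have hlt : cnt Prod.fst E₀ a < cnt Prod.fst G a := by
            rw [haD]; exact hER a
          have hsubf : (E₀.filter fun q : Fin n × Fin n => q.1 = a)
              ⊆ (G.filter fun q : Fin n × Fin n => q.1 = a) :=
            filter_subset_filter _ hsub
          have hex2 : ∃ q, q ∈ (G.filter fun q : Fin n × Fin n => q.1 = a)
              ∧ q ∉ (E₀.filter fun q : Fin n × Fin n => q.1 = a) := by
            by_contra hc
            push_neg at hc
            have : (G.filter fun q : Fin n × Fin n => q.1 = a)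
                ⊆ (E₀.filter fun q : Fin n × Fin n => q.1 = a) := hc
            have hcard := card_le_card this
            rw [cnt_fst_filter, cnt_fst_filter] at hlt
            omega
          obtain ⟨q, hq, hq'⟩ := hex2
          rw [mem_filter] at hq
          have hqE : q ∉ E₀ := fun hc => hq' (mem_filter.mpr ⟨hc, hq.2⟩)
          refine ⟨q, hq.1, hq.2, hqE, ?_⟩
          exact hsw q hq.1 hqE (by rw [hq.2]; exact haw)
        have hXT : X.card ≤ T.card := by
          apply card_le_card_of_injOn
            (fun a => if h : ∃ q : Fin n × Fin n,
              q ∈ G ∧ q.1 = a ∧ q ∉ E₀ ∧ (u, q.2) ∈ G then h.choose else (a, w))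
          · intro a ha
            have hex3 := hXprop a ha
            beta_reduce
            rw [dif_pos hex3]
            obtain ⟨h1, _, _, h4⟩ := hex3.choose_spec
            rw [Finset.mem_coe, hTdef, mem_filter]
            exact ⟨h1, h4⟩
          · intro a ha a' ha' heq
            have hex3 := hXprop a ha
            have hex3' := hXprop a' ha'
            simp only [dif_pos hex3, dif_pos hex3'] at heq
            have e1 := hex3.choose_spec.2.1
            have e2 := hex3'.choose_spec.2.1
            rw [← e1, ← e2, heq]
        have hT : T.card ≤ D * D := by
          have hsubT : T ⊆ (nbrR G u).biUnion
              (fun b => G.filter fun q : Fin n × Fin n => q.2 = b) := by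
            intro q hq
            rw [hTdef, mem_filter] at hq
            rw [mem_biUnion]
            exact ⟨q.2, by unfold nbrR; rw [mem_filter]; exact ⟨mem_univ _, hq.2⟩,
              mem_filter.mpr ⟨hq.1, rfl⟩⟩
          have h1 : T.card ≤ ∑ b ∈ nbrR G u, (G.filter fun q : Fin n × Fin n => q.2 = b).card :=
            le_trans (card_le_card hsubT) card_biUnion_le
          have h2 : ∀ b ∈ nbrR G u, (G.filter fun q : Fin n × Fin n => q.2 = b).card ≤ D := by
            intro b _
            have := hL b
            rw [cnt_snd_filter] at this
            exact this
          have h3 : ∑ b ∈ nbrR G u, (G.filter fun q : Fin n × Fin n => q.2 = b).card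
              ≤ (nbrR G u).card * D := by
            calc ∑ b ∈ nbrR G u, (G.filter fun q : Fin n × Fin n => q.2 = b).card
                ≤ ∑ _b ∈ nbrR G u, D := Finset.sum_le_sum h2
              _ = (nbrR G u).card * D := by rw [Finset.sum_const, smul_eq_mul]
          have h4 : (nbrR G u).card ≤ D := by rw [card_nbrR]; exact hR u
          calc T.card ≤ (nbrR G u).card * D := le_trans h1 h3
            _ ≤ D * D := Nat.mul_le_mul_right D h4
        omega
      obtain ⟨p, hpG, hpE, hpw, hup⟩ := hswap
      have hup1 : u ≠ p.1 := by
        intro h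
        apply hup
        rw [h]
        simpa using hpG
      have hwp2 : w ≠ p.2 := by
        intro h
        apply hpw
        rw [h]
        simpa using hpG
      set G' := insert (u, p.2) (insert (p.1, w) (G.erase p)) with hG'def
      have hsub' : E₀ ⊆ G' := by
        intro x hx
        have hxG : x ∈ G := hsub hx
        have hxp : x ≠ p := fun hc => hpE (hc ▸ hx)
        rw [hG'def]
        exact mem_insert_of_mem (mem_insert_of_mem (mem_erase.mpr ⟨hxp, hxG⟩))
      have hR' := swap_cnt_fst hpG hup1 hwp2 hup hpw
      have hL' := swap_cnt_snd hpG hup1 hwp2 hup hpw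
      refine ih G' hsub' ?_ ?_ ?_
      · intro a
        rw [hR' a]
        split
        · next h => subst h; omega
        · exact hR a
      · intro b
        rw [hL' b]
        split
        · next h => subst h; omega
        · exact hL b
      · have hlt : ∑ a, (D - cnt Prod.fst G' a) < ∑ a, (D - cnt Prod.fst G a) := by
          apply sum_lt_sum
          · intro a _
            rw [hR' a]
            split <;> omega
          · refine ⟨u, mem_univ _, ?_⟩
            rw [hR' u, if_pos rfl]
            omega
        omega


lemma addMatching {n j : ℕ} (hj : j < n) (G : Finset (Fin n × Fin n))
    (hR : ∀ u, cnt Prod.fst G u = j) (hL : ∀ w, cnt Prod.snd G w = j) :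
    ∃ G', G ⊆ G' ∧ (∀ u, cnt Prod.fst G' u = j + 1) ∧ (∀ w, cnt Prod.snd G' w = j + 1) := by
  classical
  set t : Fin n → Finset (Fin n) := fun u => univ.filter fun b => (u, b) ∉ G with ht
  have htcard : ∀ u, (t u).card = n - j := by
    intro u
    have h := card_nbrR_compl G u
    rw [hR u] at h
    have : (t u) = univ.filter fun b : Fin n => (u, b) ∉ G := rfl
    rw [this]
    omega
  have hall : ∀ A : Finset (Fin n), A.card ≤ (A.biUnion t).card := by
    intro A
    set P := univ.filter fun q : Fin n × Fin n => q.1 ∈ A ∧ (q.1, q.2) ∉ G with hP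
    have hP1 : P.card = ∑ a ∈ A, ((P.filter fun q => q.1 = a)).card := by
      apply card_eq_sum_card_fiberwise
      intro q hq
      rw [Finset.mem_coe, mem_filter] at hq
      exact hq.2.1
    have hfib1 : ∀ a ∈ A, (P.filter fun q => q.1 = a).card = n - j := by
      intro a ha
      rw [← htcard a]
      rw [show (P.filter fun q => q.1 = a) = (t a).image (fun b => (a, b)) by
        ext q
        obtain ⟨q1, q2⟩ := q
        simp only [hP, ht, mem_filter, mem_image, mem_univ, true_and, Prod.mk.injEq]
        constructor
        · rintro ⟨⟨h1, h2⟩, rfl⟩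
          exact ⟨q2, h2, rfl, rfl⟩
        · rintro ⟨b, hb, rfl, rfl⟩
          exact ⟨⟨ha, hb⟩, rfl⟩]
      exact card_image_of_injective _ (fun b b' h => by simpa using h)
    have hP2 : P.card = ∑ b ∈ A.biUnion t, (P.filter fun q => q.2 = b).card := by
      apply card_eq_sum_card_fiberwise
      intro q hq
      rw [Finset.mem_coe, mem_filter] at hq
      exact mem_biUnion.mpr ⟨q.1, hq.2.1, by
        rw [ht]
        simp only [mem_filter, mem_univ, true_and]
        exact hq.2.2⟩
    have hfib2 : ∀ b, (P.filter fun q => q.2 = b).card ≤ n - j := by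
      intro b
      have hinj : (P.filter fun q => q.2 = b).card
          ≤ (univ.filter fun a : Fin n => (a, b) ∉ G).card := by
        apply card_le_card_of_injOn (fun q => q.1)
        · intro q hq
          obtain ⟨hqP, hq2⟩ := mem_filter.mp hq
          rw [hP, mem_filter] at hqP
          simp only [Finset.mem_coe, mem_filter, mem_univ, true_and]
          rw [← hq2]
          exact hqP.2.2
        · intro q hq q' hq' h
          simp only [coe_filter, Set.mem_setOf_eq] at hq hq'
          exact Prod.ext h (hq.2.trans hq'.2.symm)
      have hcc := card_nbrL_compl G b
      rw [hL b] at hcc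
      omega
    have hle : A.card * (n - j) ≤ (A.biUnion t).card * (n - j) := by
      calc A.card * (n - j) = ∑ _a ∈ A, (n - j) := by rw [Finset.sum_const, smul_eq_mul]
        _ = P.card := by rw [hP1]; exact (Finset.sum_congr rfl hfib1).symm
        _ = ∑ b ∈ A.biUnion t, (P.filter fun q => q.2 = b).card := hP2
        _ ≤ ∑ _b ∈ A.biUnion t, (n - j) := Finset.sum_le_sum fun b _ => hfib2 b
        _ = (A.biUnion t).card * (n - j) := by rw [Finset.sum_const, smul_eq_mul]
    exact Nat.le_of_mul_le_mul_right hle (by omega)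
  obtain ⟨f, hfinj, hfmem⟩ :=
    (Finset.all_card_le_biUnion_card_iff_exists_injective t).mp hall
  have hfbij : Function.Bijective f := Finite.injective_iff_bijective.mp hfinj
  have hf : ∀ u, (u, f u) ∉ G := by
    intro u
    have := hfmem u
    rw [ht] at this
    simp only [mem_filter, mem_univ, true_and] at this
    exact this
  set Mt := univ.image fun u : Fin n => ((u, f u) : Fin n × Fin n) with hMt
  have hdisj : Disjoint G Mt := by
    rw [disjoint_right]
    intro q hq
    rw [hMt, mem_image] at hq
    obtain ⟨a, _, ha⟩ := hq
    intro hG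
    rw [← ha] at hG
    exact hf a hG
  have hMtR : ∀ u, cnt Prod.fst Mt u = 1 := by
    intro u
    rw [cnt_fst_filter]
    rw [show (Mt.filter fun q => q.1 = u) = {((u, f u) : Fin n × Fin n)} by
      ext q
      obtain ⟨q1, q2⟩ := q
      simp only [hMt, mem_filter, mem_image, mem_univ, true_and, mem_singleton,
        Prod.mk.injEq]
      constructor
      · rintro ⟨⟨a, rfl, rfl⟩, rfl⟩
        exact ⟨rfl, rfl⟩
      · rintro ⟨rfl, rfl⟩
        exact ⟨⟨q1, rfl, rfl⟩, rfl⟩]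
    exact card_singleton _
  have hMtL : ∀ b, cnt Prod.snd Mt b = 1 := by
    intro b
    obtain ⟨a, rfl⟩ := hfbij.2 b
    rw [cnt_snd_filter]
    rw [show (Mt.filter fun q => q.2 = f a) = {((a, f a) : Fin n × Fin n)} by
      ext q
      obtain ⟨q1, q2⟩ := q
      simp only [hMt, mem_filter, mem_image, mem_univ, true_and, mem_singleton,
        Prod.mk.injEq]
      constructor
      · rintro ⟨⟨c, rfl, rfl⟩, h⟩
        have hc := hfinj h
        subst hc
        exact ⟨rfl, h⟩
      · rintro ⟨rfl, rfl⟩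
        exact ⟨⟨q1, rfl, rfl⟩, rfl⟩]
    exact card_singleton _
  refine ⟨G ∪ Mt, subset_union_left, ?_, ?_⟩
  · intro u
    rw [cnt_union hdisj, hR u, hMtR u]
  · intro b
    rw [cnt_union hdisj, hL b, hMtL b]

lemma phase2 {n : ℕ} (m : ℕ) : ∀ (j : ℕ) (G : Finset (Fin n × Fin n)), j + m ≤ n →
    (∀ u, cnt Prod.fst G u = j) → (∀ w, cnt Prod.snd G w = j) →
    ∃ G', G ⊆ G' ∧ (∀ u, cnt Prod.fst G' u = j + m) ∧ (∀ w, cnt Prod.snd G' w = j + m) := by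
  induction m with
  | zero => exact fun j G _ h1 h2 => ⟨G, Subset.rfl, by simpa using h1, by simpa using h2⟩
  | succ m ih =>
    intro j G hjm h1 h2
    obtain ⟨G₁, hs, hr, hl⟩ := addMatching (by omega) G h1 h2
    obtain ⟨G', hs', hr', hl'⟩ := ih (j + 1) G₁ (by omega) hr hl
    refine ⟨G', hs.trans hs', fun u => ?_, fun w => ?_⟩
    · rw [hr' u]; omega
    · rw [hl' w]; omega


open Classical in
lemma degR_eq {n : ℕ} (E : Fin n → Fin n → Prop) (u : Fin n) :
    degR n E u = cnt Prod.fst (univ.filter fun q : Fin n × Fin n => E q.1 q.2) u := by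
  classical
  rw [cnt_fst_filter]
  unfold degR
  rw [(card_image_of_injective (univ.filter fun w => E u w)
    (f := fun w : Fin n => ((u, w) : Fin n × Fin n)) (fun b b' h => by simpa using h)).symm]
  congr 1
  ext q
  obtain ⟨q1, q2⟩ := q
  simp only [mem_filter, mem_image, mem_univ, true_and, Prod.mk.injEq]
  constructor
  · rintro ⟨w, hw, rfl, rfl⟩
    exact ⟨hw, rfl⟩
  · rintro ⟨hE, rfl⟩
    exact ⟨q2, hE, rfl, rfl⟩

open Classical in
lemma degL_eq {n : ℕ} (E : Fin n → Fin n → Prop) (w : Fin n) :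
    degL n E w = cnt Prod.snd (univ.filter fun q : Fin n × Fin n => E q.1 q.2) w := by
  classical
  rw [cnt_snd_filter]
  unfold degL
  rw [(card_image_of_injective (univ.filter fun a => E a w)
    (f := fun a : Fin n => ((a, w) : Fin n × Fin n)) (fun b b' h => by simpa using h)).symm]
  congr 1
  ext q
  obtain ⟨q1, q2⟩ := q
  simp only [mem_filter, mem_image, mem_univ, true_and, Prod.mk.injEq]
  constructor
  · rintro ⟨a, ha, rfl, rfl⟩
    exact ⟨ha, rfl⟩
  · rintro ⟨hE, rfl⟩
    exact ⟨q1, hE, rfl, rfl⟩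

open Classical in
lemma degR_mem_eq {n : ℕ} (G : Finset (Fin n × Fin n)) (u : Fin n) :
    degR n (fun a b => (a, b) ∈ G) u = cnt Prod.fst G u := by
  rw [degR_eq]
  congr 1
  ext q
  simp

open Classical in
lemma degL_mem_eq {n : ℕ} (G : Finset (Fin n × Fin n)) (w : Fin n) :
    degL n (fun a b => (a, b) ∈ G) w = cnt Prod.snd G w := by
  rw [degL_eq]
  congr 1
  ext q
  simp

end Stmt12

theorem stmt12 (Δ : ℕ) (hΔ : 0 < Δ) :
    ∃ s₀ : ℕ, ∀ s : ℕ, s₀ ≤ s → ∃ n₀ : ℕ, ∀ n : ℕ, n₀ ≤ n →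
    ∀ (M : ℝ) (k : ℕ),
      M ≤ 2 * Δ * s → M + (s : ℝ) ^ ((2:ℝ)/3) + 1 ≤ k → (k : ℝ) < n / 2 →
      ∀ E : Fin n → Fin n → Prop,
      (∀ u, M - (s : ℝ) ^ ((2:ℝ)/3) - 1 ≤ (degR n E u : ℝ) ∧
            (degR n E u : ℝ) ≤ M + (s : ℝ) ^ ((2:ℝ)/3)) →
      (∀ w, M - (s : ℝ) ^ ((2:ℝ)/3) - 1 ≤ (degL n E w : ℝ) ∧
            (degL n E w : ℝ) ≤ M + (s : ℝ) ^ ((2:ℝ)/3)) →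
      ∃ E' : Fin n → Fin n → Prop, (∀ u w, E u w → E' u w) ∧
        (∀ u, degR n E' u = k) ∧ (∀ w, degL n E' w = k) := by
  classical
  refine ⟨1, fun s hs => ?_⟩
  set B : ℕ := 2 * Δ * s + s + 1 with hB
  refine ⟨B * B + B + 1, fun n hn M k hM hMk hkn E hdR hdL => ?_⟩
  have hn1 : 1 ≤ n := by omega
  set x : ℝ := M + (s : ℝ) ^ ((2:ℝ)/3) with hx
  have hx0 : 0 ≤ x := by
    have h := (hdR ⟨0, hn1⟩).2
    have h0 : (0:ℝ) ≤ (degR n E ⟨0, hn1⟩ : ℝ) := Nat.cast_nonneg _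
    linarith
  set D : ℕ := ⌊x⌋₊ + 1 with hD
  have hDk : D ≤ k := by
    have h1 : (⌊x⌋₊ : ℝ) ≤ x := Nat.floor_le hx0
    have h2 : ((⌊x⌋₊ + 1 : ℕ) : ℝ) ≤ (k : ℝ) := by push_cast; linarith
    exact_mod_cast h2
  have hs1 : (1:ℝ) ≤ (s:ℝ) := by exact_mod_cast hs
  have hrp : (s : ℝ) ^ ((2:ℝ)/3) ≤ (s : ℝ) := by
    have h := Real.rpow_le_rpow_of_exponent_le hs1 (by norm_num : (2:ℝ)/3 ≤ 1)
    rwa [Real.rpow_one] at h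
  have hDB : D ≤ B := by
    have h1 : x ≤ ((2 * Δ * s + s : ℕ) : ℝ) := by
      rw [hx]
      push_cast
      linarith
    have h2 : ⌊x⌋₊ ≤ 2 * Δ * s + s := by
      have := Nat.floor_le_floor h1
      rwa [Nat.floor_natCast] at this
    omega
  have hnD : D * D + D < n := by
    have h1 : D * D + D ≤ B * B + B := Nat.add_le_add (Nat.mul_le_mul hDB hDB) hDB
    omega
  have hkn' : k ≤ n := by
    have h0 : (0:ℝ) ≤ (n:ℝ) := Nat.cast_nonneg _
    have : (k:ℝ) ≤ (n:ℝ) := by linarith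
    exact_mod_cast this
  set E₀ : Finset (Fin n × Fin n) := univ.filter fun q : Fin n × Fin n => E q.1 q.2 with hE₀
  have hER : ∀ u, Stmt12.cnt Prod.fst E₀ u < D := by
    intro u
    rw [hE₀, ← Stmt12.degR_eq]
    have h := (hdR u).2
    have : degR n E u ≤ ⌊x⌋₊ := Nat.le_floor h
    omega
  have hEL : ∀ w, Stmt12.cnt Prod.snd E₀ w < D := by
    intro w
    rw [hE₀, ← Stmt12.degL_eq]
    have h := (hdL w).2
    have : degL n E w ≤ ⌊x⌋₊ := Nat.le_floor h
    omega
  obtain ⟨G₁, hsub₁, hG₁R, hG₁L⟩ := Stmt12.phase1 hnD E₀ hER hEL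
  obtain ⟨Gf, hsub₂, hGfR, hGfL⟩ := Stmt12.phase2 (k - D) D G₁ (by omega) hG₁R hG₁L
  have hDkD : D + (k - D) = k := by omega
  refine ⟨fun a b => (a, b) ∈ Gf, ?_, ?_, ?_⟩
  · intro u w h
    apply hsub₂
    apply hsub₁
    rw [hE₀, mem_filter]
    exact ⟨mem_univ _, h⟩
  · intro u
    rw [Stmt12.degR_mem_eq, hGfR u, hDkD]
  · intro w
    rw [Stmt12.degL_mem_eq, hGfL w, hDkD]
end

section
/- Suppose 0 < 1/n ≪ 1/M ≪ 1/Δ, 1/r. Let L₁, ..., L_s be graphs, each on rn vertices, each with maximum degree at most Δ and an equitable r-colouring with colour classes X₁^ℓ, ..., X_r^ℓ. Assume e(L_ℓ) ≥ n/5 for each ℓ and ∑_{ℓ=1}^s e(L_ℓ) = M·C(r,2)·n ± M^{3/5}·n/2. Then for each ℓ one can apply a permutation of the indices of the colour classes of L_ℓ so that for all distinct j, j' ∈ [r], ∑_{ℓ=1}^s e(L_ℓ[X_j^ℓ, X_{j'}^ℓ]) / n = M ± M^{3/5}. -/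
open Finset

open Classical in
/-- The number of edges of the graph `G` with one endpoint in `A` and the other in `B`
(for disjoint `A`, `B`). -/
noncomputable def eBetween {V : Type*} (G : SimpleGraph V) (A B : Finset V) : ℕ :=
  ((A ×ˢ B).filter fun p => G.Adj p.1 p.2).card

lemma card_filter_prod {α β : Type*} [DecidableEq α] (A : Finset α) (B : Finset β)
    (P : α → β → Prop) [∀ a b, Decidable (P a b)] :
    ((A ×ˢ B).filter fun z => P z.1 z.2).card = ∑ a ∈ A, (B.filter fun b => P a b).card := by
  rw [Finset.card_eq_sum_card_fiberwise
    (f := fun z : α × β => z.1) (t := A)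
    (fun z hz => (Finset.mem_product.1 (Finset.mem_filter.1 hz).1).1)]
  refine Finset.sum_congr rfl fun a ha => ?_
  refine Finset.card_bij (fun z _ => z.2) ?_ ?_ ?_
  · rintro ⟨x, y⟩ hz
    simp only [Finset.mem_filter, Finset.mem_product] at hz ⊢
    obtain ⟨⟨⟨_, hy⟩, hP⟩, hx⟩ := hz
    subst hx
    exact ⟨hy, hP⟩
  · rintro ⟨x, y⟩ hz ⟨x', y'⟩ hz' h
    simp only [Finset.mem_filter] at hz hz'
    simp only at h
    ext <;> simp [h, hz.2, hz'.2]
  · intro b hb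
    simp only [Finset.mem_filter] at hb
    exact ⟨(a, b), by simp [ha, hb.1, hb.2], rfl⟩

lemma two_mul_choose_two (r : ℕ) : 2 * r.choose 2 = r * (r - 1) := by
  rw [Nat.choose_two_right]
  refine Nat.mul_div_cancel' ?_
  rcases r with _ | m
  · simp
  · simpa [Nat.mul_comm] using (Nat.even_mul_succ_self m).two_dvd

lemma exists_perm_two {r : ℕ} (a b c d : Fin r) (hab : a ≠ b) (hcd : c ≠ d) :
    ∃ τ : Equiv.Perm (Fin r), τ a = c ∧ τ b = d := by
  classical
  set b' := Equiv.swap a c b with hb'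
  have hb'c : b' ≠ c := by
    intro h
    rw [hb'] at h
    have := (Equiv.swap a c).injective (h.trans (Equiv.swap_apply_left a c).symm)
    exact hab this.symm
  refine ⟨(Equiv.swap b' d) * (Equiv.swap a c), ?_, ?_⟩
  · simp only [Equiv.Perm.mul_apply, Equiv.swap_apply_left]
    exact Equiv.swap_apply_of_ne_of_ne (Ne.symm hb'c) hcd
  · simp only [Equiv.Perm.mul_apply, ← hb', Equiv.swap_apply_left]

lemma lemA {ι K : Type*} [Fintype ι] [Fintype K] [Nonempty K] :
    ∀ (s : ℕ) (g : Fin s → K → ι → ℝ) (c : Fin s → ι → ℝ) (Q : Fin s → ℝ),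
    (∀ ℓ p, ∑ k, g ℓ k p = (Fintype.card K : ℝ) * c ℓ p) →
    (∀ ℓ k, ∑ p, (g ℓ k p) ^ 2 ≤ Q ℓ) →
    ∃ σ : Fin s → K, ∑ p, ((∑ ℓ, g ℓ (σ ℓ) p) - ∑ ℓ, c ℓ p) ^ 2 ≤ ∑ ℓ, Q ℓ := by
  intro s
  induction s with
  | zero =>
    intro g c Q _ _
    exact ⟨fun _ => Classical.arbitrary K, by simp⟩
  | succ m ih =>
    intro g c Q hmean hQ
    obtain ⟨σ₀, hσ₀⟩ := ih (fun ℓ => g ℓ.castSucc) (fun ℓ => c ℓ.castSucc)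
      (fun ℓ => Q ℓ.castSucc) (fun ℓ p => hmean _ p) (fun ℓ k => hQ _ k)
    set D : ι → ℝ := fun p => (∑ ℓ : Fin m, g ℓ.castSucc (σ₀ ℓ) p) - ∑ ℓ : Fin m, c ℓ.castSucc p
      with hD
    set gl : K → ι → ℝ := fun k p => g (Fin.last m) k p with hgl
    set cl : ι → ℝ := fun p => c (Fin.last m) p with hcl
    have hκ : (0:ℝ) ≤ (Fintype.card K : ℝ) := Nat.cast_nonneg _
    have hper : ∀ p, ∑ k, (D p + (gl k p - cl p)) ^ 2
        ≤ (∑ k, (gl k p) ^ 2) + (Fintype.card K : ℝ) * D p ^ 2 := by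
      intro p
      have h0 : ∑ k, gl k p = (Fintype.card K : ℝ) * cl p := hmean (Fin.last m) p
      have hexp : ∑ k, (D p + (gl k p - cl p)) ^ 2
          = (∑ k, (gl k p) ^ 2)
            + (2 * (D p - cl p)) * (∑ k, gl k p)
            + (Fintype.card K : ℝ) * (D p - cl p) ^ 2 := by
        have h1 : ∀ k : K, (D p + (gl k p - cl p)) ^ 2
            = (gl k p) ^ 2 + (2 * (D p - cl p)) * gl k p + (D p - cl p) ^ 2 := fun k => by ring
        rw [Finset.sum_congr rfl (fun k _ => h1 k), Finset.sum_add_distrib,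
          Finset.sum_add_distrib, ← Finset.mul_sum, Finset.sum_const, nsmul_eq_mul,
          Finset.card_univ]
      rw [hexp, h0]
      have hnn : 0 ≤ (Fintype.card K : ℝ) * (cl p) ^ 2 := mul_nonneg hκ (sq_nonneg _)
      nlinarith [hnn]
    have key : ∑ k : K, ∑ p, (D p + (gl k p - cl p)) ^ 2
        ≤ ∑ _k : K, (∑ p, D p ^ 2 + Q (Fin.last m)) := by
      rw [Finset.sum_comm]
      calc ∑ p, ∑ k, (D p + (gl k p - cl p)) ^ 2
          ≤ ∑ p, ((∑ k, (gl k p) ^ 2) + (Fintype.card K : ℝ) * D p ^ 2) :=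
            Finset.sum_le_sum fun p _ => hper p
        _ = (∑ k, ∑ p, (gl k p) ^ 2) + (Fintype.card K : ℝ) * ∑ p, D p ^ 2 := by
            rw [Finset.sum_add_distrib, ← Finset.mul_sum, Finset.sum_comm]
        _ ≤ (∑ _k : K, Q (Fin.last m)) + (Fintype.card K : ℝ) * ∑ p, D p ^ 2 := by
            gcongr with k
            exact hQ (Fin.last m) k
        _ = ∑ _k : K, (∑ p, D p ^ 2 + Q (Fin.last m)) := by
            simp [Finset.sum_const, nsmul_eq_mul]; ring
    obtain ⟨k, -, hk⟩ := Finset.exists_le_of_sum_le Finset.univ_nonempty key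
    refine ⟨(Fin.snoc σ₀ k : Fin (m+1) → K), ?_⟩
    have hrw : ∀ p, ((∑ ℓ : Fin (m+1), g ℓ ((Fin.snoc σ₀ k : Fin (m+1) → K) ℓ) p)
          - ∑ ℓ : Fin (m+1), c ℓ p)
        = D p + (gl k p - cl p) := by
      intro p
      rw [Fin.sum_univ_castSucc (f := fun ℓ : Fin (m+1) => g ℓ ((Fin.snoc σ₀ k : Fin (m+1) → K) ℓ) p),
        Fin.sum_univ_castSucc (f := fun ℓ : Fin (m+1) => c ℓ p)]
      simp only [Fin.snoc_castSucc, Fin.snoc_last, hD, hgl, hcl]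
      ring
    calc ∑ p, ((∑ ℓ : Fin (m+1), g ℓ ((Fin.snoc σ₀ k : Fin (m+1) → K) ℓ) p)
            - ∑ ℓ : Fin (m+1), c ℓ p) ^ 2
        = ∑ p, (D p + (gl k p - cl p)) ^ 2 := by
          exact Finset.sum_congr rfl fun p _ => by rw [hrw p]
      _ ≤ ∑ p, D p ^ 2 + Q (Fin.last m) := hk
      _ ≤ (∑ ℓ : Fin m, Q ℓ.castSucc) + Q (Fin.last m) := by linarith [hσ₀]
      _ = ∑ ℓ : Fin (m+1), Q ℓ := (Fin.sum_univ_castSucc _).symm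

lemma graph_facts {V : Type} [Fintype V] {r n Δ : ℕ} (G : SimpleGraph V) (Y : Fin r → Finset V)
    (hcard : ∀ i, (Y i).card = n)
    (hdisj : ∀ i j : Fin r, i ≠ j → Disjoint (Y i) (Y j))
    (hcover : ∀ v : V, ∃ i, v ∈ Y i)
    (hindep : ∀ i, ∀ u ∈ Y i, ∀ v ∈ Y i, ¬ G.Adj u v)
    (hdeg : ∀ v : V, Nat.card {w | G.Adj v w} ≤ Δ) :
    (∀ p : Fin r × Fin r, eBetween G (Y p.1) (Y p.2) ≤ Δ * n) ∧
    (∀ a, eBetween G (Y a) (Y a) = 0) ∧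
    (∑ p : Fin r × Fin r, eBetween G (Y p.1) (Y p.2) = 2 * Nat.card G.edgeSet) := by
  classical
  have hE : ∀ A B : Finset V, eBetween G A B = ((A ×ˢ B).filter fun z => G.Adj z.1 z.2).card := by
    intro A B
    simp only [eBetween, Finset.filter_congr_decidable]
  have hdeg' : ∀ a : V, ((univ : Finset V).filter fun b => G.Adj a b).card ≤ Δ := by
    intro a
    have h1 : ({w | G.Adj a w} : Set V) = ↑((univ : Finset V).filter fun b => G.Adj a b) := by
      ext x; simp
    have h2 := hdeg a
    rwa [h1, Nat.card_coe_set_eq, Set.ncard_coe_finset] at h2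
  refine ⟨?_, ?_, ?_⟩
  · intro p
    rw [hE, card_filter_prod (Y p.1) (Y p.2) G.Adj]
    calc ∑ a ∈ Y p.1, ((Y p.2).filter fun b => G.Adj a b).card
        ≤ ∑ _a ∈ Y p.1, Δ := by
          refine Finset.sum_le_sum fun a _ => ?_
          exact le_trans (Finset.card_le_card
            (Finset.filter_subset_filter _ (Finset.subset_univ _))) (hdeg' a)
      _ = Δ * n := by rw [Finset.sum_const, smul_eq_mul, hcard, Nat.mul_comm]
  · intro a
    rw [hE, Finset.card_eq_zero, Finset.filter_eq_empty_iff]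
    rintro ⟨u, v⟩ hz
    rw [Finset.mem_product] at hz
    exact hindep a u hz.1 v hz.2
  · have hbi : ((univ : Finset (V × V)).filter fun z => G.Adj z.1 z.2)
        = (univ : Finset (Fin r × Fin r)).biUnion
            (fun p => (Y p.1 ×ˢ Y p.2).filter fun z => G.Adj z.1 z.2) := by
      ext ⟨u, v⟩
      simp only [Finset.mem_filter, Finset.mem_univ, true_and, Finset.mem_biUnion,
        Finset.mem_product]
      constructor
      · intro h
        obtain ⟨i, hi⟩ := hcover u
        obtain ⟨j, hj⟩ := hcover v
        exact ⟨(i, j), ⟨hi, hj⟩, h⟩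
      · rintro ⟨p, -, h⟩
        exact h
    have hdisj2 : ∀ p ∈ (univ : Finset (Fin r × Fin r)), ∀ q ∈ (univ : Finset (Fin r × Fin r)),
        p ≠ q → Disjoint ((Y p.1 ×ˢ Y p.2).filter fun z : V × V => G.Adj z.1 z.2)
          ((Y q.1 ×ˢ Y q.2).filter fun z : V × V => G.Adj z.1 z.2) := by
      rintro ⟨a, b⟩ - ⟨a', b'⟩ - hne
      rw [Finset.disjoint_left]
      rintro ⟨u, v⟩ h1 h2
      simp only [Finset.mem_filter, Finset.mem_product] at h1 h2
      by_cases haa : a = a'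
      · subst haa
        have hbb : b ≠ b' := fun h => hne (by simp [h])
        exact (Finset.disjoint_left.1 (hdisj b b' hbb)) h1.1.2 h2.1.2
      · exact (Finset.disjoint_left.1 (hdisj a a' haa)) h1.1.1 h2.1.1
    have hcount : ∑ p : Fin r × Fin r, eBetween G (Y p.1) (Y p.2)
        = ((univ : Finset (V × V)).filter fun z => G.Adj z.1 z.2).card := by
      rw [hbi, Finset.card_biUnion hdisj2]
      exact Finset.sum_congr rfl fun p _ => hE _ _
    rw [hcount]
    have h2m := SimpleGraph.two_mul_card_edgeFinset (G := G)
    have hfe : ((univ : Finset (V × V)).filter fun z => G.Adj z.1 z.2)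
        = ((univ : Finset (V × V)).filter fun (x, y) => G.Adj x y) := by
      ext ⟨x, y⟩; simp
    rw [hfe, ← h2m, SimpleGraph.edgeFinset_card, Nat.card_eq_fintype_card]

set_option maxHeartbeats 1000000 in
theorem stmt14 (Δ r : ℕ) (hΔ : 1 ≤ Δ) (hr : 2 ≤ r) :
    ∃ M₀ : ℝ, ∀ M : ℝ, M₀ ≤ M → ∃ n₀ : ℕ, ∀ n : ℕ, n₀ ≤ n →
    ∀ (s : ℕ) (V : Type) (L : Fin s → SimpleGraph V) (X : Fin s → Fin r → Finset V),
      (∀ ℓ i, (X ℓ i).card = n) →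
      (∀ ℓ, ∀ i j : Fin r, i ≠ j → Disjoint (X ℓ i) (X ℓ j)) →
      (∀ ℓ, ∀ v : V, ∃ i, v ∈ X ℓ i) →
      (∀ ℓ i, ∀ u ∈ X ℓ i, ∀ v ∈ X ℓ i, ¬ (L ℓ).Adj u v) →
      (∀ ℓ (v : V), Nat.card {w | (L ℓ).Adj v w} ≤ Δ) →
      (∀ ℓ, (n : ℝ) / 5 ≤ (Nat.card (L ℓ).edgeSet : ℝ)) →
      |(∑ ℓ, (Nat.card (L ℓ).edgeSet : ℝ)) - M * (r.choose 2) * n| ≤ M ^ ((3:ℝ)/5) * n / 2 →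
      ∃ σ : Fin s → Equiv.Perm (Fin r),
        ∀ j j' : Fin r, j ≠ j' →
          |(∑ ℓ, (eBetween (L ℓ) (X ℓ (σ ℓ j)) (X ℓ (σ ℓ j')) : ℝ)) / n - M|
            ≤ M ^ ((3:ℝ)/5) := by
  classical
  have hC1 : (1:ℕ) ≤ r.choose 2 := Nat.choose_pos (by omega)
  have hCr1 : (1:ℝ) ≤ (r.choose 2 : ℝ) := by exact_mod_cast hC1
  have hΔ1 : (1:ℝ) ≤ (Δ:ℝ) := by exact_mod_cast hΔ
  have h16 : (1:ℝ) ≤ 16 * Δ * (r.choose 2 : ℝ) := by nlinarith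
  refine ⟨(16 * (Δ:ℝ) * (r.choose 2 : ℝ)) ^ 5, fun M hM =>
    ⟨1, fun n hn s V L X hcard hdisj hcover hindep hdeg hlow hsum => ?_⟩⟩
  have hM1 : (1:ℝ) ≤ M := le_trans (one_le_pow₀ h16) hM
  have hM0 : (0:ℝ) < M := lt_of_lt_of_le one_pos hM1
  have hn1 : (1:ℝ) ≤ (n:ℝ) := by exact_mod_cast hn
  have hn0 : (0:ℝ) < (n:ℝ) := lt_of_lt_of_le one_pos hn1
  have hM35 : (0:ℝ) ≤ M ^ ((3:ℝ)/5) := Real.rpow_nonneg hM0.le _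
  have hM35M : M ^ ((3:ℝ)/5) ≤ M := by
    calc M ^ ((3:ℝ)/5) ≤ M ^ (1:ℝ) := Real.rpow_le_rpow_of_exponent_le hM1 (by norm_num)
      _ = M := Real.rpow_one M
  have h15 : 16 * (Δ:ℝ) * (r.choose 2 : ℝ) ≤ M ^ ((1:ℝ)/5) := by
    have h1 : ((16 * (Δ:ℝ) * (r.choose 2 : ℝ)) ^ (5:ℕ)) ^ ((1:ℝ)/5) ≤ M ^ ((1:ℝ)/5) :=
      Real.rpow_le_rpow (by positivity) hM (by norm_num)
    calc 16 * (Δ:ℝ) * (r.choose 2 : ℝ)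
        = ((16 * (Δ:ℝ) * (r.choose 2 : ℝ)) ^ (5:ℕ)) ^ ((1:ℝ)/5) := by
          rw [← Real.rpow_natCast (16 * (Δ:ℝ) * (r.choose 2 : ℝ)) 5,
            ← Real.rpow_mul (by positivity)]
          norm_num
      _ ≤ M ^ ((1:ℝ)/5) := h1
  have hsq : 16 * ((Δ:ℝ) * (r.choose 2 : ℝ) * M) ≤ (M ^ ((3:ℝ)/5)) ^ 2 := by
    have h2 : (M ^ ((3:ℝ)/5)) ^ (2:ℕ) = M * M ^ ((1:ℝ)/5) := by
      rw [← Real.rpow_natCast (M ^ ((3:ℝ)/5)) 2, ← Real.rpow_mul hM0.le]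
      rw [show (3:ℝ)/5 * (2:ℕ) = 1 + 1/5 by push_cast; norm_num, Real.rpow_add hM0,
        Real.rpow_one]
    rw [h2]
    nlinarith [h15, hM0.le]
  -- setup
  set R2 : ℕ := r * r - r with hR2def
  have hR2 : (R2:ℝ) = 2 * (r.choose 2 : ℝ) := by
    have h := two_mul_choose_two r
    have h2 : r * (r - 1) = r * r - r := by rw [Nat.mul_sub, Nat.mul_one]
    rw [hR2def, ← h2, ← h]
    push_cast
    ring
  have hR2pos : (0:ℝ) < (R2:ℝ) := by rw [hR2]; linarith
  set w : Fin s → Fin r × Fin r → ℝ :=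
    fun ℓ p => ((eBetween (L ℓ) (X ℓ p.1) (X ℓ p.2) : ℕ) : ℝ) with hw
  set ee : Fin s → ℝ := fun ℓ => (Nat.card (L ℓ).edgeSet : ℝ) with hee
  have hfacts : ∀ ℓ, (∀ p : Fin r × Fin r, w ℓ p ≤ (Δ:ℝ) * n) ∧ (∀ a, w ℓ (a, a) = 0) ∧
      (∑ p : Fin r × Fin r, w ℓ p = 2 * ee ℓ) := by
    intro ℓ
    haveI : Fintype V := ⟨univ.biUnion (X ℓ), fun v => by
      obtain ⟨i, hi⟩ := hcover ℓ v
      exact Finset.mem_biUnion.2 ⟨i, Finset.mem_univ i, hi⟩⟩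
    obtain ⟨h1, h2, h3⟩ := graph_facts (L ℓ) (X ℓ) (hcard ℓ) (hdisj ℓ) (hcover ℓ)
      (hindep ℓ) (hdeg ℓ)
    refine ⟨fun p => ?_, fun a => ?_, ?_⟩
    · have := h1 p
      rw [hw]
      push_cast
      exact_mod_cast this
    · rw [hw]
      simp only
      rw [show eBetween (L ℓ) (X ℓ (a, a).1) (X ℓ (a, a).2) = 0 from h2 a]
      norm_num
    · rw [hw, hee]
      simp only
      rw [← Nat.cast_sum]
      rw [h3]
      push_cast
      ring
  have hwnn : ∀ ℓ p, 0 ≤ w ℓ p := fun ℓ p => Nat.cast_nonneg _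
  set c : Fin s → Fin r × Fin r → ℝ :=
    fun ℓ p => if p.1 = p.2 then 0 else 2 * ee ℓ / R2 with hc
  set Q : Fin s → ℝ := fun ℓ => ∑ p : Fin r × Fin r, (w ℓ p) ^ 2 with hQdef
  set g : Fin s → Equiv.Perm (Fin r) → Fin r × Fin r → ℝ :=
    fun ℓ σ p => w ℓ (σ p.1, σ p.2) with hg
  have hdiagsum : ∀ ℓ (q : Fin r × Fin r), q.1 = q.2 →
      ∑ τ : Equiv.Perm (Fin r), g ℓ τ q = 0 := by
    intro ℓ q hq
    refine Finset.sum_eq_zero fun τ _ => ?_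
    rw [hg]
    simp only
    rw [hq]
    exact (hfacts ℓ).2.1 (τ q.2)
  have hmean : ∀ ℓ p, ∑ τ : Equiv.Perm (Fin r), g ℓ τ p
      = (Fintype.card (Equiv.Perm (Fin r)) : ℝ) * c ℓ p := by
    intro ℓ p
    by_cases hpd : p.1 = p.2
    · rw [hdiagsum ℓ p hpd, hc]
      simp [hpd]
    · have hconst : ∀ q : Fin r × Fin r, q.1 ≠ q.2 →
          ∑ τ : Equiv.Perm (Fin r), g ℓ τ q = ∑ τ : Equiv.Perm (Fin r), g ℓ τ p := by
        intro q hq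
        obtain ⟨τ₀, hτ1, hτ2⟩ := exists_perm_two p.1 p.2 q.1 q.2 hpd hq
        refine Fintype.sum_equiv (Equiv.mulRight τ₀) _ _ fun τ => ?_
        rw [hg]
        simp only [Equiv.coe_mulRight, Equiv.Perm.mul_apply, hτ1, hτ2]
      have htotal : ∑ q : Fin r × Fin r, (∑ τ : Equiv.Perm (Fin r), g ℓ τ q)
          = (Fintype.card (Equiv.Perm (Fin r)) : ℝ) * (2 * ee ℓ) := by
        rw [Finset.sum_comm]
        have hinner : ∀ τ : Equiv.Perm (Fin r),
            ∑ q : Fin r × Fin r, g ℓ τ q = 2 * ee ℓ := by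
          intro τ
          rw [← (hfacts ℓ).2.2]
          exact Fintype.sum_equiv (Equiv.prodCongr τ τ) _ _ fun q => rfl
        rw [Finset.sum_congr rfl fun τ _ => hinner τ, Finset.sum_const, nsmul_eq_mul,
          Finset.card_univ]
      have hcardf : ((univ : Finset (Fin r × Fin r)).filter fun q => ¬ q.1 = q.2).card = R2 := by
        have hfl : ((univ : Finset (Fin r × Fin r)).filter fun q => ¬ q.1 = q.2)
            = (univ : Finset (Fin r)).offDiag := by
          ext q
          simp [Finset.mem_offDiag]
        rw [hfl, Finset.offDiag_card]
        simp [hR2def, Finset.card_univ]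
      have hsplit : ∑ q : Fin r × Fin r, (∑ τ : Equiv.Perm (Fin r), g ℓ τ q)
          = (R2:ℝ) * ∑ τ : Equiv.Perm (Fin r), g ℓ τ p := by
        rw [← Finset.sum_filter_of_ne (p := fun q : Fin r × Fin r => ¬ q.1 = q.2)
          (fun q _ hne hq => hne (hdiagsum ℓ q hq))]
        rw [Finset.sum_congr rfl fun q hq => hconst q (Finset.mem_filter.1 hq).2]
        rw [Finset.sum_const, nsmul_eq_mul, hcardf]
      have heq : (R2:ℝ) * ∑ τ : Equiv.Perm (Fin r), g ℓ τ p
          = (Fintype.card (Equiv.Perm (Fin r)) : ℝ) * (2 * ee ℓ) := by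
        rw [← hsplit]; exact htotal
      have hS : ∑ τ : Equiv.Perm (Fin r), g ℓ τ p
          = (Fintype.card (Equiv.Perm (Fin r)) : ℝ) * (2 * ee ℓ) / R2 := by
        rw [eq_div_iff hR2pos.ne']
        linear_combination heq
      rw [hS, hc]
      simp only [if_neg hpd]
      rw [mul_div_assoc]
  have hQle : ∀ ℓ (τ : Equiv.Perm (Fin r)), ∑ p : Fin r × Fin r, (g ℓ τ p) ^ 2 ≤ Q ℓ := by
    intro ℓ τ
    rw [hQdef]
    exact le_of_eq (Fintype.sum_equiv (Equiv.prodCongr τ τ) _ _ fun q => rfl)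
  obtain ⟨σ, hσ⟩ := lemA s g c Q hmean hQle
  set T : ℝ := ∑ ℓ, ee ℓ with hT
  have habs : |T - M * (r.choose 2 : ℝ) * n| ≤ M ^ ((3:ℝ)/5) * n / 2 := hsum
  have hTle : T ≤ 2 * M * (r.choose 2 : ℝ) * n := by
    have h1 : T - M * (r.choose 2 : ℝ) * n ≤ M ^ ((3:ℝ)/5) * n / 2 := (abs_le.1 habs).2
    have h2 : M ^ ((3:ℝ)/5) * n ≤ M * n := mul_le_mul_of_nonneg_right hM35M hn0.le
    have h3 : M * n ≤ M * (r.choose 2 : ℝ) * n := by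
      nlinarith [mul_nonneg (mul_nonneg hM0.le hn0.le) (sub_nonneg.2 hCr1)]
    have h4 : (0:ℝ) ≤ M * (r.choose 2 : ℝ) * n := by positivity
    linarith
  have hQsum : ∑ ℓ, Q ℓ ≤ 4 * Δ * M * (r.choose 2 : ℝ) * (n:ℝ) ^ 2 := by
    have h1 : ∀ ℓ, Q ℓ ≤ ((Δ:ℝ) * n) * (2 * ee ℓ) := by
      intro ℓ
      rw [hQdef]
      calc ∑ p : Fin r × Fin r, (w ℓ p) ^ 2
          ≤ ∑ p : Fin r × Fin r, ((Δ:ℝ) * n) * w ℓ p := by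
            refine Finset.sum_le_sum fun p _ => ?_
            nlinarith [(hfacts ℓ).1 p, hwnn ℓ p]
        _ = ((Δ:ℝ) * n) * ∑ p : Fin r × Fin r, w ℓ p := by rw [Finset.mul_sum]
        _ = ((Δ:ℝ) * n) * (2 * ee ℓ) := by rw [(hfacts ℓ).2.2]
    calc ∑ ℓ, Q ℓ ≤ ∑ ℓ, ((Δ:ℝ) * n) * (2 * ee ℓ) := Finset.sum_le_sum fun ℓ _ => h1 ℓ
      _ = ((Δ:ℝ) * n) * (2 * T) := by rw [← Finset.mul_sum, ← Finset.mul_sum]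
      _ ≤ ((Δ:ℝ) * n) * (2 * (2 * M * (r.choose 2 : ℝ) * n)) := by
          have hΔn : (0:ℝ) ≤ (Δ:ℝ) * n := by positivity
          nlinarith [hTle]
      _ = 4 * Δ * M * (r.choose 2 : ℝ) * (n:ℝ) ^ 2 := by ring
  refine ⟨σ, fun j j' hjj => ?_⟩
  set S : ℝ := ∑ ℓ, (eBetween (L ℓ) (X ℓ (σ ℓ j)) (X ℓ (σ ℓ j')) : ℝ) with hSdef
  have hSg : S = ∑ ℓ, g ℓ (σ ℓ) (j, j') := rfl
  have hcsum : ∑ ℓ, c ℓ (j, j') = T / (r.choose 2 : ℝ) := by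
    have h1 : ∀ ℓ : Fin s, c ℓ (j, j') = 2 * ee ℓ / R2 := by
      intro ℓ
      rw [hc]
      simp [hjj]
    rw [Finset.sum_congr rfl fun ℓ _ => h1 ℓ]
    rw [← Finset.sum_div, ← Finset.mul_sum, ← hT, hR2]
    rw [mul_div_mul_left _ _ (two_ne_zero)]
  have hkey : (S - T / (r.choose 2 : ℝ)) ^ 2 ≤ 4 * Δ * M * (r.choose 2 : ℝ) * (n:ℝ) ^ 2 := by
    have h1 : ((∑ ℓ, g ℓ (σ ℓ) (j, j')) - ∑ ℓ, c ℓ (j, j')) ^ 2 ≤ ∑ ℓ, Q ℓ := by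
      refine le_trans (Finset.single_le_sum (f := fun q : Fin r × Fin r =>
        ((∑ ℓ, g ℓ (σ ℓ) q) - ∑ ℓ, c ℓ q) ^ 2) (fun q _ => sq_nonneg _)
        (Finset.mem_univ (j, j'))) hσ
    rw [hSg, ← hcsum]
    exact le_trans h1 hQsum
  have hCr0 : (0:ℝ) < (r.choose 2 : ℝ) := lt_of_lt_of_le one_pos hCr1
  have hd1 : |S - T / (r.choose 2 : ℝ)| ≤ M ^ ((3:ℝ)/5) * n / 2 := by
    have h2 : (S - T / (r.choose 2 : ℝ)) ^ 2 ≤ (M ^ ((3:ℝ)/5) * n / 2) ^ 2 := by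
      calc (S - T / (r.choose 2 : ℝ)) ^ 2 ≤ 4 * Δ * M * (r.choose 2 : ℝ) * (n:ℝ) ^ 2 := hkey
        _ ≤ (M ^ ((3:ℝ)/5)) ^ 2 / 4 * (n:ℝ) ^ 2 := by nlinarith [hsq, sq_nonneg (n:ℝ)]
        _ = (M ^ ((3:ℝ)/5) * n / 2) ^ 2 := by ring
    calc |S - T / (r.choose 2 : ℝ)| = √((S - T / (r.choose 2 : ℝ)) ^ 2) :=
          (Real.sqrt_sq_eq_abs _).symm
      _ ≤ √((M ^ ((3:ℝ)/5) * n / 2) ^ 2) := Real.sqrt_le_sqrt h2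
      _ = |M ^ ((3:ℝ)/5) * n / 2| := Real.sqrt_sq_eq_abs _
      _ = M ^ ((3:ℝ)/5) * n / 2 := abs_of_nonneg (by positivity)
  have hd2 : |T / (r.choose 2 : ℝ) - M * n| ≤ M ^ ((3:ℝ)/5) * n / 2 := by
    have hrw : T / (r.choose 2 : ℝ) - M * n = (T - M * (r.choose 2 : ℝ) * n) / (r.choose 2 : ℝ) := by
      field_simp
    rw [hrw, abs_div, abs_of_pos hCr0]
    calc |T - M * (r.choose 2 : ℝ) * n| / (r.choose 2 : ℝ)
        ≤ (M ^ ((3:ℝ)/5) * n / 2) / (r.choose 2 : ℝ) := by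
          gcongr
      _ ≤ M ^ ((3:ℝ)/5) * n / 2 := div_le_self (by positivity) hCr1
  have habs3 : |S - M * n| ≤ M ^ ((3:ℝ)/5) * n := by
    calc |S - M * n| ≤ |S - T / (r.choose 2 : ℝ)| + |T / (r.choose 2 : ℝ) - M * n| :=
          abs_sub_le _ _ _
      _ ≤ M ^ ((3:ℝ)/5) * n / 2 + M ^ ((3:ℝ)/5) * n / 2 := add_le_add hd1 hd2
      _ = M ^ ((3:ℝ)/5) * n := by ring
  have hfin : |S / n - M| = |S - M * n| / n := by
    rw [show S / (n:ℝ) - M = (S - M * n) / n by field_simp, abs_div, abs_of_pos hn0]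
  rw [hfin, div_le_iff₀ hn0]
  linarith [habs3]
end

section
/- Suppose 0 < ε < 2^{-200}. Let G be a bipartite graph with parts A and B where |A| > 2/ε, and set d = e(G)/(|A||B|). Let D be the set of pairs {x, x'} of distinct vertices of A such that (i) both x and x' have degree greater than (d-ε)|B|, and (ii) |N_G(x) ∩ N_G(x')| < (d+ε)²|B|. If |D| > (1/2)(1-5ε)|A|², then G is (ε^{1/6}, d)-regular. -/
set_option linter.unusedSectionVars false
set_option maxHeartbeats 1000000

open Finset

variable {α : Type*} [DecidableEq α]

open Classical in
/-- The number of edges of the bipartite graph given by `E` between `A` and `B`. -/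
noncomputable def eCount (E : α → α → Prop) (A B : Finset α) : ℕ :=
  ((A ×ˢ B).filter fun p => E p.1 p.2).card

/-- The edge density between `A` and `B`. -/
noncomputable def dens (E : α → α → Prop) (A B : Finset α) : ℝ :=
  (eCount E A B : ℝ) / ((A.card : ℝ) * (B.card : ℝ))

open Classical in
/-- The number of neighbours of `v` in `B`. -/
noncomputable def degIn (E : α → α → Prop) (v : α) (B : Finset α) : ℕ :=
  (B.filter fun b => E v b).card

/-- `(ε,d)`-regularity of the bipartite graph `E` between `A` and `B`. -/
def IsRegularPair (E : α → α → Prop) (A B : Finset α) (ε d : ℝ) : Prop :=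
  ∀ A' ⊆ A, ∀ B' ⊆ B, ε * A.card < A'.card → ε * B.card < B'.card →
    |dens E A' B' - d| ≤ ε

/-- `(ε,d)`-super-regularity: regularity plus degree conditions on all vertices. -/
def IsSuperRegularPair (E : α → α → Prop) (A B : Finset α) (ε d : ℝ) : Prop :=
  IsRegularPair E A B ε d ∧
  (∀ a ∈ A, |(degIn E a B : ℝ) - d * B.card| ≤ ε * B.card) ∧
  (∀ b ∈ B, |(degIn (fun x y => E y x) b A : ℝ) - d * A.card| ≤ ε * A.card)

open Classical in
lemma ecount_eq_sum (E : α → α → Prop) (A' Y : Finset α) :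
    eCount E A' Y = ∑ y ∈ Y, (A'.filter fun x => E x y).card := by
  classical
  rw [eCount, card_filter]
  rw [Finset.sum_product]
  rw [Finset.sum_comm]
  refine Finset.sum_congr rfl fun y _ => ?_
  rw [card_filter]

open Classical in
lemma ecount_eq_sum_deg (E : α → α → Prop) (A' Y : Finset α) :
    eCount E A' Y = ∑ x ∈ A', degIn E x Y := by
  classical
  rw [eCount, card_filter, Finset.sum_product]
  refine Finset.sum_congr rfl fun x _ => ?_
  rw [degIn, card_filter]

open Classical in
lemma codeg_sum_eq (E : α → α → Prop) (A' Y : Finset α) :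
    ∑ p ∈ A' ×ˢ A', ((Y.filter fun y => E p.1 y ∧ E p.2 y).card : ℝ)
      = ∑ y ∈ Y, ((A'.filter fun x => E x y).card : ℝ)^2 := by
  classical
  have h1 : ∀ p : α × α, ((Y.filter fun y => E p.1 y ∧ E p.2 y).card : ℝ)
      = ∑ y ∈ Y, (if E p.1 y then (1:ℝ) else 0) * (if E p.2 y then (1:ℝ) else 0) := by
    intro p
    rw [card_filter, Nat.cast_sum]
    refine Finset.sum_congr rfl fun y _ => ?_
    by_cases h1 : E p.1 y <;> by_cases h2 : E p.2 y <;> simp [h1, h2]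
  simp_rw [h1]
  rw [Finset.sum_comm]
  refine Finset.sum_congr rfl fun y _ => ?_
  have h2 : ((A'.filter fun x => E x y).card : ℝ) = ∑ x ∈ A', (if E x y then (1:ℝ) else 0) := by
    rw [card_filter]
    push_cast
    refine Finset.sum_congr rfl fun x _ => ?_
    split <;> simp
  rw [h2, sq, Finset.sum_mul_sum, Finset.sum_product]

open Classical in
lemma cs_ineq (E : α → α → Prop) (A' Y : Finset α) :
    ((eCount E A' Y : ℝ))^2 ≤ (Y.card : ℝ) * ∑ p ∈ A' ×ˢ A', ((Y.filter fun y => E p.1 y ∧ E p.2 y).card : ℝ) := by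
  classical
  rw [codeg_sum_eq, ecount_eq_sum]
  push_cast
  exact_mod_cast sq_sum_le_card_mul_sum_sq

open Classical in
theorem stmt16 (ε : ℝ) (hε0 : 0 < ε) (hεu : ε < 1 / 2^200)
    (E : α → α → Prop) (A B : Finset α) (hA : 2 / ε < (A.card : ℝ))
    (hD : (1/2 : ℝ) * (1 - 5*ε) * (A.card : ℝ)^2 <
      (((A.powersetCard 2).filter fun P =>
        (∀ x ∈ P, (dens E A B - ε) * B.card < (degIn E x B : ℝ)) ∧
        (∀ x ∈ P, ∀ y ∈ P, x ≠ y →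
          ((B.filter fun b => E x b ∧ E y b).card : ℝ) < (dens E A B + ε)^2 * B.card)).card : ℝ)) :
    IsRegularPair E A B (ε ^ ((1:ℝ)/6)) (dens E A B) := by
  classical
  set d := _root_.dens E A B with hd_def
  set η : ℝ := ε ^ ((1:ℝ)/6) with hη_def
  have hη0 : 0 < η := Real.rpow_pos_of_pos hε0 _
  have hε_eq : ε = η^6 := by
    rw [hη_def, ← Real.rpow_natCast (ε ^ ((1:ℝ)/6)) 6, ← Real.rpow_mul hε0.le]
    norm_num
  have hη_small : η ≤ 1/2^33 := by
    by_contra h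
    push_neg at h
    have h2 : ((1:ℝ)/2^33)^6 < η^6 := by
      apply pow_lt_pow_left₀ h (by norm_num)
      norm_num
    rw [← hε_eq] at h2
    norm_num at h2 hεu
    linarith
  have hη1 : η ≤ 1 := by nlinarith [hη_small]
  intro A' hA'sub B' hB'sub hA'c hB'c
  set n : ℝ := (A.card : ℝ) with hn_def
  set a : ℝ := (A'.card : ℝ) with ha_def
  set b : ℝ := (B.card : ℝ) with hb_def
  set b' : ℝ := (B'.card : ℝ) with hb'_def
  have ha0 : 0 < a := lt_of_le_of_lt (mul_nonneg hη0.le (Nat.cast_nonneg _)) hA'c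
  have hb'0 : 0 < b' := lt_of_le_of_lt (mul_nonneg hη0.le (Nat.cast_nonneg _)) hB'c
  have han : a ≤ n := by
    rw [ha_def, hn_def]; exact_mod_cast Finset.card_le_card hA'sub
  have hb'b : b' ≤ b := by
    rw [hb'_def, hb_def]; exact_mod_cast Finset.card_le_card hB'sub
  have hn0 : 0 < n := lt_of_lt_of_le ha0 han
  have hb0 : 0 < b := lt_of_lt_of_le hb'0 hb'b
  have hεn : 2 < ε * n := by
    rw [div_lt_iff₀ hε0] at hA
    linarith [hA]
  have hd0 : 0 ≤ d := by rw [hd_def]; unfold _root_.dens; exact div_nonneg (Nat.cast_nonneg _) (mul_nonneg (Nat.cast_nonneg _) (Nat.cast_nonneg _))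
  have hd1 : d ≤ 1 := by
    rw [hd_def]; unfold _root_.dens
    rw [div_le_one (show (0:ℝ) < (A.card:ℝ) * (B.card:ℝ) from mul_pos hn0 hb0)]
    have h : eCount E A B ≤ A.card * B.card := by
      rw [eCount, ← Finset.card_product]
      exact Finset.card_filter_le _ _
    exact_mod_cast h
  -- the set of good pairs
  set Dset := ((A.powersetCard 2).filter fun P =>
        (∀ x ∈ P, (d - ε) * (B.card:ℝ) < (degIn E x B : ℝ)) ∧
        (∀ x ∈ P, ∀ y ∈ P, x ≠ y →
          ((B.filter fun bb => E x bb ∧ E y bb).card : ℝ) < (d + ε)^2 * (B.card:ℝ))) with hDset_def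
  -- bad vertices
  set badV := A.filter (fun x => ¬ ((d - ε) * (B.card:ℝ) < (degIn E x B : ℝ))) with hbadV_def
  set m : ℝ := (badV.card : ℝ) with hm_def
  have hm0 : 0 ≤ m := Nat.cast_nonneg _
  have hmn : m ≤ n := by
    rw [hm_def, hn_def]; exact_mod_cast Finset.card_le_card (Finset.filter_subset _ _)
  have hm5 : m ≤ 5 * ε * n := by
    have hDsub : Dset ⊆ (A \ badV).powersetCard 2 := by
      intro P hP
      rw [hDset_def, Finset.mem_filter] at hP
      obtain ⟨hP1, hdeg, _⟩ := hP
      rw [Finset.mem_powersetCard] at hP1 ⊢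
      refine ⟨fun x hx => ?_, hP1.2⟩
      rw [Finset.mem_sdiff]
      refine ⟨hP1.1 hx, ?_⟩
      rw [hbadV_def, Finset.mem_filter]
      push_neg
      intro _
      exact hdeg x hx
    have h1 : ((Dset.card : ℕ) : ℝ) ≤ (((A\badV).card.choose 2 : ℕ) : ℝ) := by
      have h := Finset.card_le_card hDsub
      rw [Finset.card_powersetCard] at h
      exact_mod_cast h
    have hmA : badV.card ≤ A.card := Finset.card_le_card (Finset.filter_subset _ _)
    have hcard : (((A\badV).card : ℕ) : ℝ) = n - m := by
      rw [Finset.card_sdiff_of_subset (Finset.filter_subset _ _), Nat.cast_sub hmA]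
    rw [Nat.cast_choose_two, hcard] at h1
    nlinarith [hD, h1, hmn, hm0, hn0, mul_nonneg hm0 hn0.le, sq_nonneg (n - m)]
  have hma : m < a := by
    have h5 : 5 * η^6 ≤ η := by nlinarith [hη_small, hη0, pow_le_pow_left₀ hη0.le hη_small 5]
    have h1 : 5 * ε * n ≤ η * n := by
      rw [hε_eq]
      nlinarith [mul_le_mul_of_nonneg_right h5 hn0.le]
    calc m ≤ 5*ε*n := hm5
    _ ≤ η * n := h1
    _ < a := hA'c
  -- bad pairs
  have hDbar : ((A.powersetCard 2 \ Dset).card : ℝ) ≤ (5*ε*n^2 - n)/2 := by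
    have h1 : Dset ⊆ A.powersetCard 2 := by rw [hDset_def]; exact Finset.filter_subset _ _
    have h2 : ((A.powersetCard 2 \ Dset).card : ℝ) = n*(n-1)/2 - (Dset.card : ℝ) := by
      rw [Finset.card_sdiff_of_subset h1, Nat.cast_sub (Finset.card_le_card h1),
        Finset.card_powersetCard, Nat.cast_choose_two, hn_def]
    rw [h2]
    linarith [hD]
  -- codegree sum bound
  have hcodeg : ∀ Y : Finset α, Y ⊆ B →
      ∑ p ∈ A' ×ˢ A', ((Y.filter fun y => E p.1 y ∧ E p.2 y).card : ℝ)
        ≤ a^2*(d+ε)^2*b + 5*ε*n^2*(Y.card:ℝ) := by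
    intro Y hY
    rw [← Finset.sum_filter_add_sum_filter_not (A' ×ˢ A')
      (fun p => p.1 ≠ p.2 ∧ ({p.1, p.2} : Finset α) ∈ Dset)]
    have hgood : ∑ p ∈ (A' ×ˢ A').filter (fun p => p.1 ≠ p.2 ∧ ({p.1, p.2} : Finset α) ∈ Dset),
        ((Y.filter fun y => E p.1 y ∧ E p.2 y).card : ℝ) ≤ a^2 * ((d+ε)^2*b) := by
      have hterm : ∀ p ∈ (A' ×ˢ A').filter (fun p => p.1 ≠ p.2 ∧ ({p.1, p.2} : Finset α) ∈ Dset),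
          ((Y.filter fun y => E p.1 y ∧ E p.2 y).card : ℝ) ≤ (d+ε)^2*b := by
        intro p hp
        rw [Finset.mem_filter] at hp
        obtain ⟨hpmem, hne, hPD⟩ := hp
        rw [hDset_def, Finset.mem_filter] at hPD
        have h2 := hPD.2.2 p.1 (by simp) p.2 (by simp) hne
        have hsub : (Y.filter fun y => E p.1 y ∧ E p.2 y) ⊆ (B.filter fun y => E p.1 y ∧ E p.2 y) :=
          Finset.filter_subset_filter _ hY
        calc ((Y.filter fun y => E p.1 y ∧ E p.2 y).card : ℝ)
            ≤ ((B.filter fun y => E p.1 y ∧ E p.2 y).card : ℝ) := by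
              exact_mod_cast Finset.card_le_card hsub
        _ ≤ (d+ε)^2*b := le_of_lt h2
      calc ∑ p ∈ (A' ×ˢ A').filter (fun p => p.1 ≠ p.2 ∧ ({p.1, p.2} : Finset α) ∈ Dset),
            ((Y.filter fun y => E p.1 y ∧ E p.2 y).card : ℝ)
          ≤ ((A' ×ˢ A').filter (fun p => p.1 ≠ p.2 ∧ ({p.1, p.2} : Finset α) ∈ Dset)).card • ((d+ε)^2*b) :=
            Finset.sum_le_card_nsmul _ _ _ hterm
      _ = (((A' ×ˢ A').filter (fun p => p.1 ≠ p.2 ∧ ({p.1, p.2} : Finset α) ∈ Dset)).card : ℝ) * ((d+ε)^2*b) := by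
            rw [nsmul_eq_mul]
      _ ≤ a^2 * ((d+ε)^2*b) := by
            have hcard : (((A' ×ˢ A').filter (fun p => p.1 ≠ p.2 ∧ ({p.1, p.2} : Finset α) ∈ Dset)).card : ℝ) ≤ a^2 := by
              have h1 := Finset.card_filter_le (A' ×ˢ A') (fun p => p.1 ≠ p.2 ∧ ({p.1, p.2} : Finset α) ∈ Dset)
              rw [Finset.card_product] at h1
              have : ((A'.card * A'.card : ℕ) : ℝ) = a^2 := by rw [ha_def]; push_cast; ring
              rw [← this]
              exact_mod_cast h1
            exact mul_le_mul_of_nonneg_right hcard (mul_nonneg (sq_nonneg _) hb0.le)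
    have hbad : ∑ p ∈ (A' ×ˢ A').filter (fun p => ¬(p.1 ≠ p.2 ∧ ({p.1, p.2} : Finset α) ∈ Dset)),
        ((Y.filter fun y => E p.1 y ∧ E p.2 y).card : ℝ) ≤ (5*ε*n^2) * (Y.card:ℝ) := by
      set Bad := (A' ×ˢ A').filter (fun p => ¬(p.1 ≠ p.2 ∧ ({p.1, p.2} : Finset α) ∈ Dset)) with hBad_def
      have hterm : ∀ p ∈ Bad, ((Y.filter fun y => E p.1 y ∧ E p.2 y).card : ℝ) ≤ (Y.card:ℝ) := by
        intro p _
        exact_mod_cast Finset.card_le_card (Finset.filter_subset _ _)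
      have hsum : ∑ p ∈ Bad, ((Y.filter fun y => E p.1 y ∧ E p.2 y).card : ℝ)
          ≤ (Bad.card : ℝ) * (Y.card:ℝ) := by
        calc ∑ p ∈ Bad, ((Y.filter fun y => E p.1 y ∧ E p.2 y).card : ℝ)
            ≤ Bad.card • (Y.card:ℝ) := Finset.sum_le_card_nsmul _ _ _ hterm
        _ = (Bad.card : ℝ) * (Y.card:ℝ) := by rw [nsmul_eq_mul]
      have hBadcard : (Bad.card : ℝ) ≤ 5*ε*n^2 := by
        have hsplit : Bad ⊆ ((A'×ˢA').filter fun p => p.1 = p.2)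
            ∪ ((A'×ˢA').filter fun p => p.1 ≠ p.2 ∧ ({p.1,p.2}:Finset α) ∉ Dset) := by
          intro p hp
          rw [hBad_def, Finset.mem_filter] at hp
          obtain ⟨hmem, hnot⟩ := hp
          rw [Finset.mem_union, Finset.mem_filter, Finset.mem_filter]
          by_cases h : p.1 = p.2
          · exact Or.inl ⟨hmem, h⟩
          · exact Or.inr ⟨hmem, h, fun hd2 => hnot ⟨h, hd2⟩⟩
        have hdiag : (((A'×ˢA').filter fun p => p.1 = p.2).card : ℝ) ≤ a := by
          have h1 : ((A'×ˢA').filter fun p => p.1 = p.2).card ≤ A'.card := by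
            apply Finset.card_le_card_of_injOn Prod.fst
            · intro p hp
              simp only [Finset.coe_filter, Set.mem_setOf_eq, Finset.mem_product] at hp
              exact hp.1.1
            · intro p hp q hq hpq
              rw [Finset.coe_filter] at hp hq
              simp only [Set.mem_setOf_eq] at hp hq
              exact Prod.ext hpq (by rw [← hp.2, ← hq.2, hpq])
          rw [ha_def]
          exact_mod_cast h1
        have hoff : (((A'×ˢA').filter fun p => p.1 ≠ p.2 ∧ ({p.1,p.2}:Finset α) ∉ Dset).card : ℝ)
            ≤ 2 * ((A.powersetCard 2 \ Dset).card : ℝ) := by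
          set Off := (A'×ˢA').filter fun p => p.1 ≠ p.2 ∧ ({p.1,p.2}:Finset α) ∉ Dset with hOff_def
          have h1 : Off.card ≤ 2 * (Off.image (fun p => ({p.1, p.2} : Finset α))).card := by
            apply Finset.card_le_mul_card_image
            intro s hs
            obtain ⟨p0, hp0, rfl⟩ := Finset.mem_image.mp hs
            have hsub2 : (Off.filter fun p => ({p.1, p.2} : Finset α) = ({p0.1, p0.2} : Finset α))
                ⊆ ({(p0.1, p0.2), (p0.2, p0.1)} : Finset (α × α)) := by
              intro q hq
              rw [Finset.mem_filter] at hq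
              obtain ⟨hq1, hq2⟩ := hq
              rw [hOff_def, Finset.mem_filter] at hq1
              have hne : q.1 ≠ q.2 := hq1.2.1
              have h1' : q.1 ∈ ({p0.1,p0.2} : Finset α) := by rw [← hq2]; simp
              have h2' : q.2 ∈ ({p0.1,p0.2} : Finset α) := by rw [← hq2]; simp
              simp only [Finset.mem_insert, Finset.mem_singleton] at h1' h2' ⊢
              rcases h1' with h1'|h1' <;> rcases h2' with h2'|h2'
              · exact absurd (h1'.trans h2'.symm) hne
              · exact Or.inl (Prod.ext h1' h2')
              · exact Or.inr (Prod.ext h1' h2')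
              · exact absurd (h1'.trans h2'.symm) hne
            calc (Off.filter fun p => ({p.1, p.2} : Finset α) = ({p0.1, p0.2} : Finset α)).card
                ≤ ({(p0.1, p0.2), (p0.2, p0.1)} : Finset (α × α)).card := Finset.card_le_card hsub2
            _ ≤ 2 := by
                apply le_trans (Finset.card_insert_le _ _)
                simp
          have h2 : (Off.image (fun p => ({p.1, p.2} : Finset α))).card ≤ (A.powersetCard 2 \ Dset).card := by
            apply Finset.card_le_card
            intro s hs
            obtain ⟨p, hp, rfl⟩ := Finset.mem_image.mp hs
            rw [hOff_def, Finset.mem_filter, Finset.mem_product] at hp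
            rw [Finset.mem_sdiff]
            constructor
            · rw [Finset.mem_powersetCard]
              constructor
              · intro x hx
                simp only [Finset.mem_insert, Finset.mem_singleton] at hx
                rcases hx with rfl|rfl
                · exact hA'sub hp.1.1
                · exact hA'sub hp.1.2
              · exact Finset.card_pair hp.2.1
            · exact hp.2.2
          have h1' : ((Off.card : ℕ) : ℝ) ≤ 2 * (((Off.image (fun p => ({p.1, p.2} : Finset α))).card : ℕ) : ℝ) := by
            exact_mod_cast h1
          have h2' : (((Off.image (fun p => ({p.1, p.2} : Finset α))).card : ℕ) : ℝ)
              ≤ (((A.powersetCard 2 \ Dset).card : ℕ) : ℝ) := by exact_mod_cast h2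
          linarith
        calc (Bad.card : ℝ) ≤ ((((A'×ˢA').filter fun p => p.1 = p.2)
              ∪ ((A'×ˢA').filter fun p => p.1 ≠ p.2 ∧ ({p.1,p.2}:Finset α) ∉ Dset)).card : ℝ) := by
              exact_mod_cast Finset.card_le_card hsplit
        _ ≤ (((A'×ˢA').filter fun p => p.1 = p.2).card : ℝ)
              + (((A'×ˢA').filter fun p => p.1 ≠ p.2 ∧ ({p.1,p.2}:Finset α) ∉ Dset).card : ℝ) := by
              exact_mod_cast Finset.card_union_le _ _
        _ ≤ a + 2 * ((A.powersetCard 2 \ Dset).card : ℝ) := by linarith [hdiag, hoff]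
        _ ≤ a + (5*ε*n^2 - n) := by linarith [hDbar]
        _ ≤ 5*ε*n^2 := by linarith [han]
      calc ∑ p ∈ Bad, ((Y.filter fun y => E p.1 y ∧ E p.2 y).card : ℝ)
          ≤ (Bad.card : ℝ) * (Y.card:ℝ) := hsum
      _ ≤ (5*ε*n^2) * (Y.card:ℝ) := mul_le_mul_of_nonneg_right hBadcard (Nat.cast_nonneg _)
    linarith [hgood, hbad]
  -- main quantities
  set e1 : ℝ := (eCount E A' B' : ℝ) with he1_def
  set e2 : ℝ := (eCount E A' (B \ B') : ℝ) with he2_def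
  set S1 : ℝ := ∑ p ∈ A' ×ˢ A', ((B'.filter fun y => E p.1 y ∧ E p.2 y).card : ℝ) with hS1_def
  set S2 : ℝ := ∑ p ∈ A' ×ˢ A', (((B\B').filter fun y => E p.1 y ∧ E p.2 y).card : ℝ) with hS2_def
  have hbb'cast : (((B\B').card : ℕ) : ℝ) = b - b' := by
    rw [Finset.card_sdiff_of_subset hB'sub, Nat.cast_sub (Finset.card_le_card hB'sub)]
  have hCS1 : e1^2 ≤ b' * S1 := by
    have h := cs_ineq E A' B'
    rw [← he1_def, ← hb'_def, ← hS1_def] at h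
    exact h
  have hCS2 : e2^2 ≤ (b - b') * S2 := by
    have h := cs_ineq E A' (B\B')
    rw [← he2_def, hbb'cast, ← hS2_def] at h
    exact h
  have hS1b : S1 ≤ a^2*(d+ε)^2*b + 5*ε*n^2*b' := by
    have h := hcodeg B' hB'sub
    rw [← hS1_def, ← hb'_def] at h
    exact h
  have hSsum : S1 + S2 ≤ a^2*(d+ε)^2*b + 5*ε*n^2*b := by
    have h1 := hcodeg B (le_refl B)
    rw [← hb_def] at h1
    have h2 : S1 + S2 = ∑ p ∈ A'×ˢA', ((B.filter fun y => E p.1 y ∧ E p.2 y).card : ℝ) := by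
      rw [hS1_def, hS2_def, ← Finset.sum_add_distrib]
      refine Finset.sum_congr rfl fun p _ => ?_
      rw [← Nat.cast_add]
      congr 1
      rw [Finset.card_filter, Finset.card_filter, Finset.card_filter, add_comm]
      exact Finset.sum_sdiff hB'sub
    rw [← h2] at h1
    exact h1
  have hEadd : ((eCount E A' B : ℕ) : ℝ) = e1 + e2 := by
    rw [he1_def, he2_def, ← Nat.cast_add]
    congr 1
    rw [ecount_eq_sum, ecount_eq_sum, ecount_eq_sum, add_comm]
    exact (Finset.sum_sdiff hB'sub).symm
  have he10 : (0:ℝ) ≤ e1 := by rw [he1_def]; positivity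
  have he20 : (0:ℝ) ≤ e2 := by rw [he2_def]; positivity
  have he1ub : e1 ≤ a * b' := by
    have h : eCount E A' B' ≤ A'.card * B'.card := by
      rw [eCount, ← Finset.card_product]
      exact Finset.card_filter_le _ _
    rw [he1_def, ha_def, hb'_def]
    exact_mod_cast h
  have hL : (a - m)*(d - ε)*b ≤ e1 + e2 := by
    rw [← hEadd]
    have hsum : ((eCount E A' B : ℕ) : ℝ) = ∑ x ∈ A', ((degIn E x B : ℕ) : ℝ) := by
      rw [ecount_eq_sum_deg]
      push_cast
      rfl
    by_cases hde : 0 ≤ d - ε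
    · have h1 : ∑ x ∈ A'\badV, ((degIn E x B : ℕ):ℝ) ≤ ∑ x ∈ A', ((degIn E x B : ℕ):ℝ) :=
        Finset.sum_le_sum_of_subset_of_nonneg (Finset.sdiff_subset) (fun x _ _ => by positivity)
      have h2 : ((A'\badV).card : ℝ) * ((d-ε)*b) ≤ ∑ x ∈ A'\badV, ((degIn E x B : ℕ):ℝ) := by
        rw [← nsmul_eq_mul]
        apply Finset.card_nsmul_le_sum
        intro x hx
        rw [Finset.mem_sdiff] at hx
        have hxA : x ∈ A := hA'sub hx.1
        have hxg : (d - ε) * (B.card:ℝ) < (degIn E x B : ℝ) := by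
          by_contra hcon
          exact hx.2 (by rw [hbadV_def, Finset.mem_filter]; exact ⟨hxA, hcon⟩)
        rw [← hb_def] at hxg
        exact le_of_lt hxg
      have h3 : a - m ≤ ((A'\badV).card : ℝ) := by
        have h4 : A'.card ≤ (A'\badV).card + badV.card := by
          calc A'.card ≤ ((A'\badV) ∪ badV).card := by
                apply Finset.card_le_card
                intro x hx
                rw [Finset.mem_union, Finset.mem_sdiff]
                by_cases h : x ∈ badV
                · exact Or.inr h
                · exact Or.inl ⟨hx, h⟩
          _ ≤ (A'\badV).card + badV.card := Finset.card_union_le _ _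
        have h5 : a ≤ ((A'\badV).card : ℝ) + m := by
          rw [ha_def, hm_def]
          exact_mod_cast h4
        linarith only [h5]
      calc (a-m)*(d-ε)*b = (a-m)*((d-ε)*b) := by ring
      _ ≤ ((A'\badV).card : ℝ) * ((d-ε)*b) :=
          mul_le_mul_of_nonneg_right h3 (mul_nonneg hde hb0.le)
      _ ≤ ∑ x ∈ A'\badV, ((degIn E x B : ℕ):ℝ) := h2
      _ ≤ ∑ x ∈ A', ((degIn E x B : ℕ):ℝ) := h1
      _ = ((eCount E A' B : ℕ) : ℝ) := hsum.symm
    · push_neg at hde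
      have hx : (0:ℝ) ≤ (a-m)*b := mul_nonneg (by linarith only [hma, hm0]) hb0.le
      have hneg : (a-m)*(d-ε)*b ≤ 0 := by
        have := mul_nonpos_of_nonneg_of_nonpos hx hde.le
        linarith only [this]
      have h0 : (0:ℝ) ≤ ((eCount E A' B : ℕ) : ℝ) := by positivity
      linarith only [hneg, h0]
  -- final reduction
  have hab'0 : 0 < a * b' := mul_pos ha0 hb'0
  have goal_eq : _root_.dens E A' B' - d = (e1 - d*(a*b'))/(a*b') := by
    unfold _root_.dens
    rw [← ha_def, ← hb'_def, ← he1_def]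
    rw [eq_div_iff (ne_of_gt hab'0), sub_mul, div_mul_cancel₀ _ (ne_of_gt hab'0)]
  rw [goal_eq, abs_div, abs_of_pos hab'0, div_le_iff₀ hab'0]
  rw [abs_le]
  clear_value d η n a b b' m e1 e2 S1 S2
  clear goal_eq hEadd hbb'cast hcodeg hDbar hD hA
  clear hd_def hη_def hn_def ha_def hb_def hb'_def hm_def he1_def he2_def hS1_def hS2_def hDset_def hbadV_def
  clear hA'sub hB'sub
  clear Dset badV A' B' A B E
  set t : ℝ := e1 - d*(a*b') with ht_def
  set L : ℝ := (a-m)*(d-ε)*b with hL_def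
  clear_value t L
  have hη4 : η^4 ≤ 1/2^132 := by
    calc η^4 ≤ (1/2^33)^4 := pow_le_pow_left₀ hη0.le hη_small 4
    _ = 1/2^132 := by norm_num
  have hboth : -(η*(a*b')) ≤ t ∧ t ≤ η*(a*b') := by
    by_cases hcase : e1 < L
    · -- Case A
      have hbb'0 : (0:ℝ) ≤ b - b' := by linarith only [hb'b]
      have hLe2 : L - e1 ≤ e2 := by linarith only [hL, hcase]
      have hL0 : (0:ℝ) ≤ L - e1 := by linarith only [hcase]
      have hsq2 : (L - e1)^2 ≤ (b - b') * S2 := by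
        have h := mul_self_le_mul_self hL0 hLe2
        linarith only [h, hCS2]
      have hA1 : e1^2*(b-b') ≤ (b'*S1)*(b-b') := mul_le_mul_of_nonneg_right hCS1 hbb'0
      have hA2 : (L-e1)^2*b' ≤ ((b-b')*S2)*b' := mul_le_mul_of_nonneg_right hsq2 hb'0.le
      have hA3 : (b'*(b-b'))*(S1+S2) ≤ (b'*(b-b'))*(a^2*(d+ε)^2*b + 5*ε*n^2*b) :=
        mul_le_mul_of_nonneg_left hSsum (by positivity)
      have h1 : e1^2*(b-b') + (L-e1)^2*b' ≤ (b'*(b-b'))*(a^2*(d+ε)^2*b + 5*ε*n^2*b) := by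
        linarith only [hA1, hA2, hA3]
      have h1b := mul_le_mul_of_nonneg_left h1 hb0.le
      have h2 : (e1*b - L*b')^2 ≤ (b'*(b-b'))*(b*(a^2*(d+ε)^2*b + 5*ε*n^2*b) - L^2) := by
        linarith only [h1b]
      clear hA1 hA2 hA3 h1 h1b hsq2 hLe2 hL0 hCS1 hCS2 hS1b hSsum
      have hdd : (a*(d+ε))^2 - ((a-m)*(d-ε))^2 ≤ 21*ε*n^2 := by
        have q2 : ε*a ≤ ε*n := mul_le_mul_of_nonneg_left han hε0.le
        have hu_v1 : a*(d+ε) - (a-m)*(d-ε) ≤ 7*ε*n := by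
          have w1 : (0:ℝ) ≤ m*(1-(d-ε)) :=
            mul_nonneg hm0 (by linarith only [hd1, hε0])
          linarith only [hm5, w1, q2]
        have hu_v0 : 0 ≤ a*(d+ε) - (a-m)*(d-ε) := by
          have w1 : (0:ℝ) ≤ m*d := mul_nonneg hm0 hd0
          have w2 : (0:ℝ) ≤ ε*(2*a-m) :=
            mul_nonneg hε0.le (by linarith only [hma, ha0])
          linarith only [w1, w2]
        have hεle1 : ε ≤ 1 := by
          have := pow_le_pow_left₀ hη0.le hη1 6
          linarith only [hε_eq, this]
        have hsum3 : a*(d+ε) + (a-m)*(d-ε) ≤ 3*n := by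
          have q1 : a*d ≤ a := mul_le_of_le_one_right ha0.le hd1
          have q3 : ε*n ≤ 1*n := mul_le_mul_of_nonneg_right hεle1 hn0.le
          have q4 : (0:ℝ) ≤ (a-m)*(1-(d-ε)) :=
            mul_nonneg (by linarith only [hma]) (by linarith only [hd1, hε0])
          linarith only [q1, q2, q3, q4, han, hm0]
        have p1 : 0 ≤ (a*(d+ε) - (a-m)*(d-ε)) * (3*n - (a*(d+ε) + (a-m)*(d-ε))) :=
          mul_nonneg hu_v0 (by linarith only [hsum3])
        have p3 : (a*(d+ε) - (a-m)*(d-ε)) * (3*n) ≤ (7*ε*n)*(3*n) :=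
          mul_le_mul_of_nonneg_right hu_v1 (by positivity)
        linarith only [p1, p3]
      have hBRL : b*(a^2*(d+ε)^2*b + 5*ε*n^2*b) - L^2 ≤ 26*ε*n^2*b^2 := by
        rw [hL_def]
        linarith only [mul_le_mul_of_nonneg_right hdd (by positivity : (0:ℝ) ≤ b^2)]
      have h3 : (e1*b - L*b')^2 ≤ 26*ε*n^2*b^2*(b'*b) := by
        have hnn : (0:ℝ) ≤ b'*(b-b') := by positivity
        have hstep := mul_le_mul_of_nonneg_left hBRL hnn
        have hstep2 : (b'*(b-b'))*(26*ε*n^2*b^2) ≤ (b'*b)*(26*ε*n^2*b^2) := by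
          apply mul_le_mul_of_nonneg_right _ (by positivity)
          have : b - b' ≤ b := by linarith only [hb'0]
          exact mul_le_mul_of_nonneg_left this hb'0.le
        linarith only [h2, hstep, hstep2]
      clear h2 hdd hBRL
      set c : ℝ := a*ε + m*(d-ε) with hc_def
      clear_value c
      have hid : e1*b - L*b' = b*(t + b'*c) := by rw [ht_def, hL_def, hc_def]; ring
      have h4 : (t + b'*c)^2 ≤ 26*ε*n^2*(b*b') := by
        rw [hid] at h3
        have h2b : b^2*(t + b'*c)^2 ≤ b^2*(26*ε*n^2*(b*b')) := by linarith only [h3]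
        have hb2 : (0:ℝ) < b^2 := by positivity
        exact le_of_mul_le_mul_left h2b hb2
      clear h3 hid
      have h5 : (t + b'*c)^2 ≤ (η^2*n*b'/100)^2 := by
        have hb'η : η * b ≤ b' := hB'c.le
        have t1 : 26*ε*n^2*(b*b') ≤ 26*η^5*n^2*b'^2 := by
          rw [hε_eq]
          linarith only
            [mul_le_mul_of_nonneg_left hb'η (by positivity : (0:ℝ) ≤ 26*η^5*n^2*b')]
        have t2 : 26*η^5*n^2*b'^2 ≤ (η^2*n*b'/100)^2 := by
          have hq : (260000:ℝ)*η ≤ 1 := by linarith only [hη_small]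
          linarith only
            [mul_le_mul_of_nonneg_left hq (by positivity : (0:ℝ) ≤ η^4*n^2*b'^2/10000)]
        linarith only [t1, t2, h4]
      set q : ℝ := η^2*n*b'/100 with hq_def
      clear_value q
      have hqpos : 0 < q := by rw [hq_def]; positivity
      have hT1 : t + b'*c ≤ q := by
        by_contra hcon
        push_neg at hcon
        nlinarith only [h5, mul_pos (show (0:ℝ) < t + b'*c - q by linarith only [hcon])
          (show (0:ℝ) < t + b'*c + q by linarith only [hcon, hqpos])]
      have hT2 : -q ≤ t + b'*c := by
        by_contra hcon
        push_neg at hcon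
        nlinarith only [h5, mul_pos (show (0:ℝ) < -(t + b'*c) - q by linarith only [hcon])
          (show (0:ℝ) < -(t + b'*c) + q by linarith only [hcon, hqpos])]
      have hc0 : 0 ≤ c := by
        rw [hc_def]
        have w1 : (0:ℝ) ≤ m*d := mul_nonneg hm0 hd0
        have w2 : (0:ℝ) ≤ ε*(a-m) := mul_nonneg hε0.le (by linarith only [hma])
        linarith only [w1, w2]
      have hc6 : c ≤ 6*ε*n := by
        rw [hc_def]
        have w1 : (0:ℝ) ≤ m*(1-(d-ε)) := mul_nonneg hm0 (by linarith only [hd1, hε0])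
        have w2 : ε*a ≤ ε*n := mul_le_mul_of_nonneg_left han hε0.le
        linarith only [hm5, w1, w2]
      have hx2 : q + 6*ε*n*b' ≤ η*(a*b') := by
        rw [hq_def, hε_eq]
        have r1 : (η*n)*(η*b') ≤ a*(η*b') :=
          mul_le_mul_of_nonneg_right hA'c.le (by positivity)
        have r2 : η^4*(η^2*n*b') ≤ (1/2^132)*(η^2*n*b') :=
          mul_le_mul_of_nonneg_right hη4 (by positivity)
        have r3 : (0:ℝ) ≤ η^2*n*b' := by positivity
        linarith only [r1, r2, r3]
      constructor
      · have hx1 : b'*c ≤ b'*(6*ε*n) := mul_le_mul_of_nonneg_left hc6 hb'0.le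
        linarith only [hT2, hx1, hx2]
      · have hpos6 : (0:ℝ) ≤ 6*ε*n*b' := by positivity
        linarith only [hT1, mul_nonneg hb'0.le hc0, hx2, hpos6]
    · -- Case B
      push_neg at hcase
      have hεle : ε ≤ η^2 := by
        have h6 : η^6 ≤ η^2 := pow_le_pow_of_le_one hη0.le hη1 (by norm_num)
        linarith only [hε_eq, h6]
      constructor
      · -- lower bound
        have t1 : d*a*(b' - b) ≤ 0 :=
          mul_nonpos_of_nonneg_of_nonpos (mul_nonneg hd0 ha0.le) (by linarith only [hb'b])
        have t2 : m*(d-ε)*b ≤ 5*ε*n*b := by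
          have w1 : (0:ℝ) ≤ m*(1-(d-ε))*b :=
            mul_nonneg (mul_nonneg hm0 (by linarith only [hd1, hε0])) hb0.le
          have w2 : m*b ≤ 5*ε*n*b := mul_le_mul_of_nonneg_right hm5 hb0.le
          linarith only [w1, w2]
        have t5 : a*ε*b ≤ ε*n*b := by
          have := mul_le_mul_of_nonneg_right
            (mul_le_mul_of_nonneg_left han hε0.le) hb0.le
          linarith only [this]
        have t3 : ε*n*b ≤ η^5*n*b' := by
          rw [hε_eq]
          have := mul_le_mul_of_nonneg_left hB'c.le (by positivity : (0:ℝ) ≤ η^5*n)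
          linarith only [this]
        have t4 : 6*η^5*n*b' ≤ η*(a*b') := by
          have s1 : 6*η^4*(η*n) ≤ 6*η^4*a :=
            mul_le_mul_of_nonneg_left hA'c.le (by positivity)
          have c3 : (6:ℝ)*η^3 ≤ 1 := by
            have := pow_le_pow_left₀ hη0.le hη_small 3
            nlinarith only [this]
          have s2 : 6*η^4*a ≤ η*a := by
            have := mul_le_mul_of_nonneg_right c3 (mul_nonneg hη0.le ha0.le)
            linarith only [this]
          have s3 : 6*η^5*n ≤ η*a := by linarith only [s1, s2]
          have := mul_le_mul_of_nonneg_right s3 hb'0.le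
          linarith only [this]
        rw [ht_def]
        have hLb : L ≤ e1 := hcase
        rw [hL_def] at hLb
        linarith only [t1, t2, t5, t3, t4, hLb]
      · -- upper bound
        have e1sq : e1^2 ≤ a^2*(d+ε)^2*b*b' + 5*ε*n^2*b'^2 := by
          have := mul_le_mul_of_nonneg_left hS1b hb'0.le
          linarith only [hCS1, this]
        by_cases hdsmall : d ≤ η^2
        · have hdε2 : d + ε ≤ 2*η^2 := by linarith only [hdsmall, hεle]
          have hdεsq : (d+ε)^2 ≤ 4*η^4 := by
            have := mul_self_le_mul_self (by linarith only [hd0, hε0] : (0:ℝ) ≤ d + ε) hdε2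
            nlinarith only [this]
          have u1 : a^2*(d+ε)^2*b*b' ≤ a^2*(4*η^4)*b*b' := by
            have := mul_le_mul_of_nonneg_left hdεsq
              (by positivity : (0:ℝ) ≤ a^2*(b*b'))
            linarith only [this]
          have u2 : a^2*(4*η^4)*b*b' ≤ 4*η^3*a^2*b'^2 := by
            have := mul_le_mul_of_nonneg_left hB'c.le
              (by positivity : (0:ℝ) ≤ 4*η^3*a^2*b')
            linarith only [this]
          have u3 : 5*ε*n^2*b'^2 ≤ 5*η^4*a^2*b'^2 := by
            rw [hε_eq]
            have s1 : (η*n)*(η*n) ≤ a*a :=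
              mul_self_le_mul_self (by positivity) hA'c.le
            have := mul_le_mul_of_nonneg_left s1
              (by positivity : (0:ℝ) ≤ 5*η^4*b'^2)
            linarith only [this]
          have s4 : 4*η^3 + 5*η^4 ≤ η^2 := by
            have w1 : (4*η)*η^2 ≤ (1/2:ℝ)*η^2 :=
              mul_le_mul_of_nonneg_right (by linarith only [hη_small]) (sq_nonneg η)
            have w2 : η*η ≤ (1/2^33:ℝ)*(1/2^33) := by
              have := mul_le_mul_of_nonneg_left hη_small hη0.le
              nlinarith only [this, hη_small, hη0]
            have w3 : (5*η^2)*η^2 ≤ (1/2:ℝ)*η^2 := by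
              apply mul_le_mul_of_nonneg_right _ (sq_nonneg η)
              nlinarith only [w2]
            nlinarith only [w1, w3]
          have u4 : e1^2 ≤ (η*(a*b'))^2 := by
            have := mul_le_mul_of_nonneg_right s4
              (by positivity : (0:ℝ) ≤ a^2*b'^2)
            nlinarith only [e1sq, u1, u2, u3, this]
          have u5 : e1 ≤ η*(a*b') := by
            by_contra hcon
            push_neg at hcon
            nlinarith only [u4, mul_pos
              (show (0:ℝ) < e1 - η*(a*b') by linarith only [hcon])
              (show (0:ℝ) < e1 + η*(a*b') by
                linarith only [hcon, mul_pos (mul_pos hη0 ha0) hb'0])]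
          rw [ht_def]
          have := mul_nonneg hd0 hab'0.le
          linarith only [u5, this]
        · -- d > η^2
          push_neg at hdsmall
          by_contra hcon
          push_neg at hcon
          rw [ht_def] at hcon
          have he1lb : (d+η)*(a*b') < e1 := by nlinarith only [hcon]
          have hdε0 : 0 < d - ε := by linarith only [hdsmall, hεle]
          have ham0 : 0 < a - m := by linarith only [hma]
          have he1pos : 0 < e1 := by
            have : (0:ℝ) < (d+η)*(a*b') :=
              mul_pos (by linarith only [hd0, hη0]) hab'0
            linarith only [he1lb, this]
          have P2 : (a-m)*(d-ε)*b ≤ e1 := by rw [← hL_def]; exact hcase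
          have P3 : (a-m)*(d-ε)*b' ≤ e1 := by
            have h := mul_le_mul_of_nonneg_left hb'b (mul_pos ham0 hdε0).le
            have h2 : (a-m)*(d-ε)*b' ≤ (a-m)*(d-ε)*b := by linarith only [h]
            linarith only [h2, P2]
          have key0 : (a-m)*(d-ε)*e1^2 ≤ a^2*(d+ε)^2*b'*e1 + 5*ε*n^2*b'*e1 := by
            have w1 := mul_le_mul_of_nonneg_left e1sq (mul_pos ham0 hdε0).le
            have w2 : a^2*(d+ε)^2*b*b'*((a-m)*(d-ε)) ≤ a^2*(d+ε)^2*b'*e1 := by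
              have := mul_le_mul_of_nonneg_left P2 (by positivity : (0:ℝ) ≤ a^2*(d+ε)^2*b')
              linarith only [this]
            have w3 : 5*ε*n^2*b'^2*((a-m)*(d-ε)) ≤ 5*ε*n^2*b'*e1 := by
              have := mul_le_mul_of_nonneg_left P3 (by positivity : (0:ℝ) ≤ 5*ε*n^2*b')
              linarith only [this]
            linarith only [w1, w2, w3]
          have key1 : (a-m)*(d-ε)*((d+η)*(a*b'))*e1 ≤ a^2*(d+ε)^2*b'*e1 + 5*ε*n^2*b'*e1 := by
            have := mul_le_mul_of_nonneg_left he1lb.le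
              (by positivity : (0:ℝ) ≤ (a-m)*(d-ε)*e1)
            linarith only [this, key0]
          have key : (a-m)*(d-ε)*(d+η)*a ≤ a^2*(d+ε)^2 + 5*ε*n^2 := by
            have hbe : 0 < b'*e1 := mul_pos hb'0 he1pos
            have h2 : ((a-m)*(d-ε)*(d+η)*a) * (b'*e1) ≤ (a^2*(d+ε)^2 + 5*ε*n^2) * (b'*e1) := by
              linarith only [key1]
            exact le_of_mul_le_mul_right h2 hbe
          have hm5' : m ≤ 5*η^5*a := by
            have hm5'' := hm5
            rw [hε_eq] at hm5''
            have := mul_le_mul_of_nonneg_left hA'c.le (by positivity : (0:ℝ) ≤ 5*η^5)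
            linarith only [hm5'', this]
          have hn2a : 5*ε*n^2 ≤ 5*η^4*a^2 := by
            rw [hε_eq]
            have s1 : (η*n)*(η*n) ≤ a*a :=
              mul_self_le_mul_self (by positivity) hA'c.le
            have := mul_le_mul_of_nonneg_left s1 (by positivity : (0:ℝ) ≤ 5*η^4)
            linarith only [this]
          have hfin : (a - 5*η^5*a)*(d-ε)*(d+η)*a ≤ a^2*(d+ε)^2 + 5*η^4*a^2 := by
            have hfac : 0 ≤ (d-ε)*(d+η)*a := by positivity
            have := mul_nonneg (by linarith only [hm5'] : (0:ℝ) ≤ 5*η^5*a - m) hfac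
            linarith only [this, key, hn2a]
          have ha2 : 0 < a^2 := by positivity
          rw [hε_eq] at hfin
          have hdiv : (1 - 5*η^5)*(d-η^6)*(d+η) ≤ (d+η^6)^2 + 5*η^4 := by
            apply le_of_mul_le_mul_right _ ha2
            linarith only [hfin]
          have k1 : η^3 < d*η := by
            have := mul_lt_mul_of_pos_right hdsmall hη0
            linarith only [this]
          have kb : (d-η^6)*(d+η) ≤ 2 := by
            have h1' : d - η^6 ≤ 1 := by
              have : (0:ℝ) ≤ η^6 := by positivity
              linarith only [hd1, this]
            have h2' : d + η ≤ 2 := by linarith only [hd1, hη1]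
            have := mul_le_mul h1' h2' (by linarith only [hd0, hη0]) (by norm_num)
            linarith only [this]
          have kdη6 : d*η^6 ≤ η^6 := mul_le_of_le_one_left (by positivity) hd1
          have kmul : 5*η^5*((d-η^6)*(d+η)) ≤ 10*η^5 := by
            have := mul_le_mul_of_nonneg_left kb (by positivity : (0:ℝ) ≤ 5*η^5)
            linarith only [this]
          have e1' : d*η ≤ 3*η^6 + η^7 + 10*η^5 + η^12 + 5*η^4 := by
            nlinarith only [hdiv, kdη6, kmul]
          have p5 : η^5 ≤ η^4 := pow_le_pow_of_le_one hη0.le hη1 (by norm_num)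
          have p6 : η^6 ≤ η^4 := pow_le_pow_of_le_one hη0.le hη1 (by norm_num)
          have p7 : η^7 ≤ η^4 := pow_le_pow_of_le_one hη0.le hη1 (by norm_num)
          have p12 : η^12 ≤ η^4 := pow_le_pow_of_le_one hη0.le hη1 (by norm_num)
          have e2' : d*η ≤ 20*η^4 := by linarith only [e1', p5, p6, p7, p12]
          have e0 : (0:ℝ) < η^3 := by positivity
          have e3' : 20*η*η^3 ≤ (1/2)*η^3 := by
            apply mul_le_mul_of_nonneg_right _ e0.le
            linarith only [hη_small]
          linarith only [k1, e2', e3', e0]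
  exact hboth
end
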